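/- arXiv:2408.10452 — 5 statements merged into one kernel-verified Lean document; each statement's English description precedes it below -/
import Mathlib

section
/- For a connected graph G, B(G) = 1 if and only if G is isomorphic to the path P_2 (a single edge). -/
open SimpleGraph

/-- A token may stay in place or move along an edge. -/
def stepRel {V : Type*} (G : SimpleGraph V) (x y : V) : Prop := x = y ∨ G.Adj x y

/-- The sequence of positions in the pursuit game: `(gamePlay ...) n` is the pair
(pursuer positions, evader position) after `n` full rounds; at time `0` the pursuers
have been placed (`binit`) and then the evader placed (`pinit binit`). In each round,
the pursuers move first (via `bmove`, seeing the current state), then the evader moves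
(via `pmove`, seeing the pursuers' new positions and his own position). -/
def gamePlay {V : Type*} {k : ℕ} (binit : Fin k → V) (bmove : (Fin k → V) → V → Fin k → V)
    (pinit : (Fin k → V) → V) (pmove : (Fin k → V) → V → V) : ℕ → (Fin k → V) × V
  | 0 => (binit, pinit binit)
  | n + 1 =>
      let s := gamePlay binit bmove pinit pmove n
      (bmove s.1 s.2, pmove (bmove s.1 s.2) s.2)

/-- `k` bodyguards have a winning strategy on `G`: they can place themselves and move so
that, against every president strategy, after finitely many rounds they occupy the whole
open neighbourhood of the president's vertex at the end of every bodyguard turn. -/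
def BodyguardsWin {V : Type*} (G : SimpleGraph V) (k : ℕ) : Prop :=
  ∃ (binit : Fin k → V) (bmove : (Fin k → V) → V → Fin k → V),
    (∀ bs p i, stepRel G (bs i) (bmove bs p i)) ∧
    ∀ (pinit : (Fin k → V) → V) (pmove : (Fin k → V) → V → V),
      (∀ bs p, stepRel G p (pmove bs p)) →
      ∃ N, ∀ n, N ≤ n →
        ∀ v, G.Adj (gamePlay binit bmove pinit pmove n).2 v →
          ∃ i, (gamePlay binit bmove pinit pmove (n + 1)).1 i = v

/-- The bodyguard number of a finite graph. -/
noncomputable def bodyguardNumber {V : Type*} (G : SimpleGraph V) [Fintype V] : ℕ :=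
  sInf {k | BodyguardsWin G k}

/-- `k` cops have a winning strategy in classic Cops and Robber on `G`: at some point a cop
occupies the same vertex as the robber (either right after a cop move, or at the end of a
round). -/
def CopsWin {V : Type*} (G : SimpleGraph V) (k : ℕ) : Prop :=
  ∃ (cinit : Fin k → V) (cmove : (Fin k → V) → V → Fin k → V),
    (∀ cs r i, stepRel G (cs i) (cmove cs r i)) ∧
    ∀ (rinit : (Fin k → V) → V) (rmove : (Fin k → V) → V → V),
      (∀ cs r, stepRel G r (rmove cs r)) →
      ∃ n i, (gamePlay cinit cmove rinit rmove (n + 1)).1 i =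
                (gamePlay cinit cmove rinit rmove n).2 ∨
             (gamePlay cinit cmove rinit rmove n).1 i =
                (gamePlay cinit cmove rinit rmove n).2

/-- The cop number of a finite graph. -/
noncomputable def copNumber {V : Type*} (G : SimpleGraph V) [Fintype V] : ℕ :=
  sInf {k | CopsWin G k}


section Aux

variable {V : Type*}

/-- If the president sits still, his position never changes. -/
lemma gamePlay_const_snd {k : ℕ} (binit : Fin k → V) (bmove : (Fin k → V) → V → Fin k → V)
    (p : V) (n : ℕ) :
    (gamePlay binit bmove (fun _ => p) (fun _ q => q) n).2 = p := by
  induction n with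
  | zero => rfl
  | succ n ih => simp [gamePlay, ih]

/-- If the graph has an edge, zero bodyguards cannot win. -/
lemma not_bodyguardsWin_zero (G : SimpleGraph V) {v w : V} (hvw : G.Adj v w) :
    ¬ BodyguardsWin G 0 := by
  rintro ⟨binit, bmove, hstep, hwin⟩
  obtain ⟨N, hN⟩ := hwin (fun _ => v) (fun _ q => q) (fun _ _ => Or.inl rfl)
  obtain ⟨i, -⟩ := hN N le_rfl w (by rw [gamePlay_const_snd]; exact hvw)
  exact i.elim0

/-- If the graph has no edge, zero bodyguards win vacuously. -/
lemma bodyguardsWin_zero_of_no_edge (G : SimpleGraph V) (h : ∀ v w : V, ¬ G.Adj v w) :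
    BodyguardsWin G 0 := by
  refine ⟨fun i => i.elim0, fun _ _ i => i.elim0, fun _ _ i => i.elim0, ?_⟩
  intro pinit pmove hp
  exact ⟨0, fun n _ v hadj => absurd hadj (h _ _)⟩

/-- If one bodyguard wins, every vertex has at most one neighbour. -/
lemma unique_nbr_of_bodyguardsWin_one (G : SimpleGraph V) (h : BodyguardsWin G 1) :
    ∀ p a b : V, G.Adj p a → G.Adj p b → a = b := by
  obtain ⟨binit, bmove, hstep, hwin⟩ := h
  intro p a b ha hb
  obtain ⟨N, hN⟩ := hwin (fun _ => p) (fun _ q => q) (fun _ _ => Or.inl rfl)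
  obtain ⟨i, hi⟩ := hN N le_rfl a (by rw [gamePlay_const_snd]; exact ha)
  obtain ⟨j, hj⟩ := hN N le_rfl b (by rw [gamePlay_const_snd]; exact hb)
  rw [← hi, ← hj, Subsingleton.elim i j]

lemma walk_mem_pair (G : SimpleGraph V) {v w : V} (hvw : G.Adj v w)
    (huniq : ∀ p a b : V, G.Adj p a → G.Adj p b → a = b) :
    ∀ {x y : V} (_ : G.Walk x y), x = v ∨ x = w → y = v ∨ y = w := by
  intro x y pw
  induction pw with
  | nil => exact id
  | @cons x z y h q ih =>
      rintro (rfl | rfl)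
      · exact ih (Or.inr (huniq x z w h hvw))
      · exact ih (Or.inl (huniq x z v h hvw.symm))

end Aux

/-- For a connected graph `G`, `B(G) = 1` iff `G` is isomorphic to the path `P_2`. -/
theorem bodyguardNumber_eq_one_iff {V : Type*} [Fintype V] (G : SimpleGraph V)
    (hc : G.Connected) :
    bodyguardNumber G = 1 ↔ Nonempty (G ≃g SimpleGraph.pathGraph 2) := by
  classical
  constructor
  · -- forward direction
    intro h
    have hSne : {k | BodyguardsWin G k}.Nonempty := by
      by_contra hS
      rw [Set.not_nonempty_iff_eq_empty] at hS
      rw [bodyguardNumber, hS, Nat.sInf_empty] at h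
      exact one_ne_zero h.symm
    have h1 : BodyguardsWin G 1 := by
      have := Nat.sInf_mem hSne
      rwa [show sInf {k | BodyguardsWin G k} = 1 from h] at this
    have h0 : ¬ BodyguardsWin G 0 := by
      intro h0
      have : bodyguardNumber G = 0 :=
        Nat.le_zero.mp (Nat.sInf_le h0)
      rw [h] at this; exact one_ne_zero this
    -- G has an edge
    have hedge : ∃ v w : V, G.Adj v w := by
      by_contra he
      push_neg at he
      exact h0 (bodyguardsWin_zero_of_no_edge G he)
    obtain ⟨v, w, hvw⟩ := hedge
    have hne : v ≠ w := G.ne_of_adj hvw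
    have huniq := unique_nbr_of_bodyguardsWin_one G h1
    have hcover : ∀ x : V, x = v ∨ x = w := by
      intro x
      obtain ⟨pw⟩ := hc.preconnected v x
      exact walk_mem_pair G hvw huniq pw (Or.inl rfl)
    have hadj : ∀ x y : V, G.Adj x y ↔ x ≠ y := by
      intro x y
      constructor
      · exact fun hxy => G.ne_of_adj hxy
      · intro hxy
        rcases hcover x with rfl | rfl <;> rcases hcover y with rfl | rfl
        · exact absurd rfl hxy
        · exact hvw
        · exact hvw.symm
        · exact absurd rfl hxy
    refine ⟨⟨⟨fun x => if x = v then 0 else 1, fun i => if i = 0 then v else w, ?_, ?_⟩, ?_⟩⟩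
    · intro x
      rcases hcover x with rfl | rfl
      · simp
      · simp [hne.symm, (by decide : (1 : Fin 2) ≠ 0)]
    · intro i
      fin_cases i
      · simp
      · simp [hne.symm, (by decide : (1 : Fin 2) ≠ 0)]
    · intro x y
      simp only [Equiv.coe_fn_mk, pathGraph_two_eq_top, top_adj, hadj]
      rcases hcover x with rfl | rfl <;> rcases hcover y with rfl | rfl <;>
        simp [hne, hne.symm]
  · -- reverse direction
    rintro ⟨e⟩
    have hadj : ∀ x y : V, G.Adj x y ↔ e x ≠ e y := by
      intro x y
      rw [← e.map_rel_iff]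
      simp [pathGraph_two_eq_top]
    have h1 : BodyguardsWin G 1 := by
      refine ⟨fun _ => e.symm 0, fun bs p _ => e.symm (e p + 1), ?_, ?_⟩
      · intro bs p i
        rcases eq_or_ne (bs i) (e.symm (e p + 1)) with hE | hE
        · exact Or.inl hE
        · refine Or.inr ((hadj _ _).mpr ?_)
          simpa using fun hcontra => hE (by
            apply e.toEquiv.injective
            simpa using hcontra)
      · intro pinit pmove hp
        refine ⟨0, fun n _ v hadjv => ?_⟩
        refine ⟨0, ?_⟩
        set s := gamePlay (fun _ => e.symm 0) (fun bs p _ => e.symm (e p + 1)) pinit pmove n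
          with hs
        show e.symm (e s.2 + 1) = v
        have h1 : e v ≠ e s.2 := by
          have := (hadj _ _).mp hadjv
          exact fun hcontra => this hcontra.symm
        have h2 : e v = e s.2 + 1 := by
          revert h1; generalize e v = a; generalize e _ = b; revert a b; decide
        rw [← h2]
        exact e.toEquiv.symm_apply_apply v
    have h0 : ¬ BodyguardsWin G 0 := by
      refine not_bodyguardsWin_zero G (v := e.symm 0) (w := e.symm 1) ?_
      rw [hadj]
      simp
    apply le_antisymm
    · exact Nat.sInf_le h1
    · rw [Nat.one_le_iff_ne_zero]
      intro hz
      rcases Nat.sInf_eq_zero.mp hz with hz0 | hz0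
      · exact h0 hz0
      · have hmem : (1 : ℕ) ∈ {k | BodyguardsWin G k} := h1
        rw [hz0] at hmem
        exact hmem
end

section
/- For a connected graph G, B(G) = 2 if and only if G is isomorphic to a path P_n with n ≥ 3, or to a cycle C_m with 3 ≤ m ≤ 5. -/
open SimpleGraph

section Basics

variable {V : Type*} (G : SimpleGraph V)

lemma stepRel_refl (x : V) : stepRel G x x := Or.inl rfl

lemma gamePlay_zero {k : ℕ} (binit : Fin k → V) (bmove) (pinit) (pmove) :
    gamePlay (V := V) binit bmove pinit pmove 0 = (binit, pinit binit) := rfl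

lemma gamePlay_succ {k : ℕ} (binit : Fin k → V) (bmove) (pinit) (pmove) (n : ℕ) :
    gamePlay (V := V) binit bmove pinit pmove (n+1) =
      ((bmove (gamePlay binit bmove pinit pmove n).1 (gamePlay binit bmove pinit pmove n).2),
        pmove (bmove (gamePlay binit bmove pinit pmove n).1
          (gamePlay binit bmove pinit pmove n).2)
          (gamePlay binit bmove pinit pmove n).2) := rfl

/-- If the bodyguards win with `k` guards, every vertex has degree at most `k`:
the president can just sit at a vertex forever. -/
lemma degree_le_of_bodyguardsWin [Fintype V] [DecidableRel G.Adj] {k : ℕ}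
    (h : BodyguardsWin G k) (v : V) : G.degree v ≤ k := by
  classical
  obtain ⟨binit, bmove, _hleg, hwin⟩ := h
  obtain ⟨N, hN⟩ := hwin (fun _ => v) (fun _ p => p) (fun _ p => Or.inl rfl)
  set play := gamePlay binit bmove (fun _ => v) (fun _ p => p) with hplay
  have hsnd : ∀ n, (play n).2 = v := by
    intro n; induction n with
    | zero => rfl
    | succ n ih => rw [hplay, gamePlay_succ, ← hplay]; simpa using ih
  have hcov : ∀ w, G.Adj v w → ∃ i : Fin k, (play (N+1)).1 i = w := by
    intro w hw
    have := hN N le_rfl w (by rw [hsnd]; exact hw)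
    exact this
  -- injection from neighbors to Fin k
  have : Fintype.card {w // w ∈ G.neighborFinset v} ≤ Fintype.card (Fin k) := by
    apply Fintype.card_le_of_injective
      (fun w => (hcov w.1 (by have := w.2; rwa [mem_neighborFinset] at this)).choose)
    intro a b hab
    have ha' := (hcov a.1 (by have := a.2; rwa [mem_neighborFinset] at this)).choose_spec
    have hb' := (hcov b.1 (by have := b.2; rwa [mem_neighborFinset] at this)).choose_spec
    simp only [] at hab
    rw [hab] at ha'
    exact Subtype.ext (ha'.symm.trans hb')
  calc G.degree v = Fintype.card {w // w ∈ G.neighborFinset v} := by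
        rw [Fintype.card_coe]; rfl
    _ ≤ Fintype.card (Fin k) := this
    _ = k := Fintype.card_fin k

end Basics

section Iso

variable {V W : Type*} {G : SimpleGraph V} {H : SimpleGraph W}

lemma stepRel_of_iso (e : G ≃g H) {x y : W} (h : stepRel H x y) :
    stepRel G (e.symm x) (e.symm y) := by
  rcases h with h | h
  · exact Or.inl (by rw [h])
  · exact Or.inr (e.symm.map_rel_iff.mpr h)

lemma BodyguardsWin.of_iso (e : G ≃g H) {k : ℕ} (h : BodyguardsWin H k) :
    BodyguardsWin G k := by
  obtain ⟨binit, bmove, hleg, hwin⟩ := h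
  refine ⟨fun i => e.symm (binit i),
    fun bs p i => e.symm (bmove (fun j => e (bs j)) (e p) i), ?_, ?_⟩
  · intro bs p i
    have := hleg (fun j => e (bs j)) (e p) i
    have h2 := stepRel_of_iso e this
    simpa using h2
  · intro pinit pmove hpleg
    set pinitH : (Fin k → W) → W := fun bs => e (pinit (fun j => e.symm (bs j))) with hpinitH
    set pmoveH : (Fin k → W) → W → W :=
      fun bs p => e (pmove (fun j => e.symm (bs j)) (e.symm p)) with hpmoveH
    have hplegH : ∀ bs p, stepRel H p (pmoveH bs p) := by
      intro bs p
      have := hpleg (fun j => e.symm (bs j)) (e.symm p)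
      rcases this with h | h
      · refine Or.inl ?_
        show p = e (pmove (fun j => e.symm (bs j)) (e.symm p))
        rw [← h, e.apply_symm_apply]
      · refine Or.inr ?_
        have := e.map_rel_iff.mpr h
        simpa using this
    obtain ⟨N, hN⟩ := hwin pinitH pmoveH hplegH
    have key : ∀ n, gamePlay (fun i => e.symm (binit i))
        (fun bs p i => e.symm (bmove (fun j => e (bs j)) (e p) i)) pinit pmove n =
        (fun i => e.symm ((gamePlay binit bmove pinitH pmoveH n).1 i),
         e.symm ((gamePlay binit bmove pinitH pmoveH n).2)) := by
      intro n
      induction n with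
      | zero =>
        refine Prod.ext rfl ?_
        simp only [gamePlay, hpinitH, RelIso.symm_apply_apply]
      | succ n ih =>
        simp only [gamePlay]
        rw [ih]
        simp only [hpmoveH, RelIso.apply_symm_apply, RelIso.symm_apply_apply]
    refine ⟨N, fun n hn v hv => ?_⟩
    rw [key] at hv
    have hv' : H.Adj (gamePlay binit bmove pinitH pmoveH n).2 (e v) := by
      have : G.Adj (e.symm ((gamePlay binit bmove pinitH pmoveH n).2)) (e.symm (e v)) := by
        simpa using hv
      exact e.symm.map_rel_iff.mp this
    obtain ⟨i, hi⟩ := hN n hn (e v) hv'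
    refine ⟨i, ?_⟩
    rw [key]
    simp only []
    rw [hi, e.symm_apply_apply]

end Iso

section Cover

variable {V : Type*}

instance stepRelDecidable [DecidableEq V] {G : SimpleGraph V} [DecidableRel G.Adj] :
    DecidableRel (stepRel G) := fun x y => inferInstanceAs (Decidable (x = y ∨ G.Adj x y))

open Classical in
/-- The guards' move: reach the covering pair `(A p, B p)` if possible (in one of the two
role assignments), otherwise stay put. -/
noncomputable def coverMove (G : SimpleGraph V) (A B : V → V) (bs : Fin 2 → V) (p : V) :
    Fin 2 → V :=
  if stepRel G (bs 0) (A p) ∧ stepRel G (bs 1) (B p) then ![A p, B p]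
  else if stepRel G (bs 0) (B p) ∧ stepRel G (bs 1) (A p) then ![B p, A p]
  else bs

lemma bodyguardsWin_two_of_cover (G : SimpleGraph V) (A B : V → V) (b0 b1 : V)
    (hAB : ∀ p p', stepRel G p p' → stepRel G (A p) (A p') ∧ stepRel G (B p) (B p'))
    (hNb : ∀ p v, G.Adj p v → v = A p ∨ v = B p)
    (hinit : ∀ p, (stepRel G b0 (A p) ∧ stepRel G b1 (B p)) ∨
      (stepRel G b0 (B p) ∧ stepRel G b1 (A p))) :
    BodyguardsWin G 2 := by
  classical
  set Q : (Fin 2 → V) → V → Prop := fun bs p =>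
    (stepRel G (bs 0) (A p) ∧ stepRel G (bs 1) (B p)) ∨
    (stepRel G (bs 0) (B p) ∧ stepRel G (bs 1) (A p)) with hQ
  refine ⟨![b0, b1], coverMove G A B, ?_, ?_⟩
  · intro bs p i
    unfold coverMove
    split_ifs with h1 h2
    · fin_cases i
      · simpa using h1.1
      · simpa using h1.2
    · fin_cases i
      · simpa using h2.1
      · simpa using h2.2
    · exact Or.inl rfl
  · intro pinit pmove hpleg
    set play := gamePlay ![b0, b1] (coverMove G A B) pinit pmove with hplay
    have hmove : ∀ bs p, Q bs p → coverMove G A B bs p = ![A p, B p] ∨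
        coverMove G A B bs p = ![B p, A p] := by
      intro bs p hq
      unfold coverMove
      split_ifs with h1 h2
      · exact Or.inl rfl
      · exact Or.inr rfl
      · rcases hq with h | h
        · exact absurd h h1
        · exact absurd h h2
    have hInv : ∀ n, Q (play n).1 (play n).2 := by
      intro n
      induction n with
      | zero =>
        have : (play 0).1 = ![b0, b1] := rfl
        rw [this]
        simpa [hQ] using hinit (play 0).2
      | succ n ih =>
        have h1 : (play (n+1)).1 = coverMove G A B (play n).1 (play n).2 := rfl
        have h2 : (play (n+1)).2 = pmove ((play (n+1)).1) (play n).2 := rfl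
        have hstep : stepRel G (play n).2 (play (n+1)).2 := by rw [h2]; exact hpleg _ _
        rcases hmove _ _ ih with hc | hc
        · rw [h1, hc]
          rcases hAB _ _ hstep with ⟨hA, hB⟩
          exact Or.inl ⟨by simpa using hA, by simpa using hB⟩
        · rw [h1, hc]
          rcases hAB _ _ hstep with ⟨hA, hB⟩
          exact Or.inr ⟨by simpa using hB, by simpa using hA⟩
    refine ⟨0, fun n _ v hv => ?_⟩
    have h1 : (play (n+1)).1 = coverMove G A B (play n).1 (play n).2 := rfl
    rcases hmove _ _ (hInv n) with hc | hc <;> rw [h1, hc] <;>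
      rcases hNb _ _ hv with hV | hV
    · exact ⟨0, by simp [hV]⟩
    · exact ⟨1, by simp [hV]⟩
    · exact ⟨1, by simp [hV]⟩
    · exact ⟨0, by simp [hV]⟩

lemma bodyguardsWin_cycle_two {m : ℕ} (h3 : 3 ≤ m) (h5 : m ≤ 5) :
    BodyguardsWin (cycleGraph m) 2 := by
  interval_cases m
  · exact bodyguardsWin_two_of_cover _ (fun p => p - 1) (fun p => p + 1) 0 2
      (by decide) (by decide) (by decide)
  · exact bodyguardsWin_two_of_cover _ (fun p => p - 1) (fun p => p + 1) 0 2
      (by decide) (by decide) (by decide)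
  · exact bodyguardsWin_two_of_cover _ (fun p => p - 1) (fun p => p + 1) 0 2
      (by decide) (by decide) (by decide)

end Cover

section Path

/-- Left target: `p-1`, or `1` when `p = 0`. -/
def predF {n : ℕ} (p : Fin n) : Fin n :=
  if p.val = 0 then ⟨1 % n, Nat.mod_lt 1 p.pos⟩ else ⟨p.val - 1, by have := p.isLt; omega⟩

/-- Right target: `p+1`, or `p-1` when `p = n-1`. -/
def succF {n : ℕ} (p : Fin n) : Fin n :=
  if h : p.val + 1 < n then ⟨p.val + 1, h⟩ else ⟨p.val - 1, by have := p.isLt; omega⟩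

lemma predF_val {n : ℕ} (p : Fin n) :
    (predF p).val = if p.val = 0 then 1 % n else p.val - 1 := by
  unfold predF; split <;> rfl

lemma succF_val {n : ℕ} (p : Fin n) :
    (succF p).val = if p.val + 1 < n then p.val + 1 else p.val - 1 := by
  unfold succF; split <;> rfl

/-- Shift one step to the right if possible. -/
def shiftF {n : ℕ} (x : Fin n) : Fin n :=
  if h : x.val + 1 < n then ⟨x.val + 1, h⟩ else x

lemma shiftF_val {n : ℕ} (x : Fin n) :
    (shiftF x).val = if x.val + 1 < n then x.val + 1 else x.val := by
  unfold shiftF; split <;> rfl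

lemma pstep_iff {n : ℕ} {u v : Fin n} :
    stepRel (SimpleGraph.pathGraph n) u v ↔
      (u.val = v.val ∨ u.val + 1 = v.val ∨ v.val + 1 = u.val) := by
  unfold stepRel
  rw [SimpleGraph.pathGraph_adj, Fin.ext_iff]

open Classical in
/-- The guards' strategy on the path: if the covering pair around the president is
reachable, go there; otherwise shift right. -/
noncomputable def pathMove (n : ℕ) (bs : Fin 2 → Fin n) (p : Fin n) : Fin 2 → Fin n :=
  if stepRel (SimpleGraph.pathGraph n) (bs 0) (predF p) ∧
     stepRel (SimpleGraph.pathGraph n) (bs 1) (succF p)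
  then ![predF p, succF p] else fun i => shiftF (bs i)

lemma bodyguardsWin_path_two {n : ℕ} (hn : 3 ≤ n) :
    BodyguardsWin (SimpleGraph.pathGraph n) 2 := by
  classical
  have h1n : 1 % n = 1 := Nat.mod_eq_of_lt (by omega)
  set G := SimpleGraph.pathGraph n with hG
  have hmove_pos : ∀ (bs : Fin 2 → Fin n) p,
      (stepRel G (bs 0) (predF p) ∧ stepRel G (bs 1) (succF p)) →
      pathMove n bs p = ![predF p, succF p] := by
    intro bs p h; unfold pathMove; rw [if_pos h]
  have hmove_neg : ∀ (bs : Fin 2 → Fin n) p,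
      ¬ (stepRel G (bs 0) (predF p) ∧ stepRel G (bs 1) (succF p)) →
      pathMove n bs p = fun i => shiftF (bs i) := by
    intro bs p h; unfold pathMove; rw [if_neg h]
  -- targets move compatibly
  have hTT : ∀ p p' : Fin n, stepRel G p p' →
      stepRel G (predF p) (predF p') ∧ stepRel G (succF p) (succF p') := by
    intro p p' hstep
    have hp := p.isLt; have hp' := p'.isLt
    rw [hG, pstep_iff] at hstep
    constructor <;>
      (rw [hG, pstep_iff]; simp only [predF_val, succF_val, h1n]; split_ifs <;> omega)
  -- in a chase state with the president close, the guards can cover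
  have hL2 : ∀ (bs : Fin 2 → Fin n) (p : Fin n),
      (bs 0).val + 2 = (bs 1).val → ((bs 0).val + 1 ≤ p.val ∨ (bs 0).val = 0) →
      p.val ≤ (bs 0).val + 2 →
      stepRel G (bs 0) (predF p) ∧ stepRel G (bs 1) (succF p) := by
    intro bs p h2 hp hple
    have hb1 := (bs 1).isLt; have hpl := p.isLt
    constructor <;>
      (rw [hG, pstep_iff]; simp only [predF_val, succF_val, h1n]; split_ifs <;> omega)
  refine ⟨![⟨0, by omega⟩, ⟨2, by omega⟩], pathMove n, ?_, ?_⟩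
  · intro bs p i
    by_cases h : stepRel G (bs 0) (predF p) ∧ stepRel G (bs 1) (succF p)
    · rw [hmove_pos bs p h]
      fin_cases i
      · simpa using h.1
      · simpa using h.2
    · rw [hmove_neg bs p h]
      show stepRel G (bs i) (shiftF (bs i))
      rw [hG, pstep_iff, shiftF_val]
      split_ifs <;> omega
  · intro pinit pmove hpleg
    set play := gamePlay ![⟨0, by omega⟩, ⟨2, by omega⟩] (pathMove n) pinit pmove with hplay
    have hstep_play : ∀ j, stepRel G (play j).2 (play (j+1)).2 := by
      intro j
      have : (play (j+1)).2 = pmove ((play (j+1)).1) (play j).2 := rfl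
      rw [this]; exact hpleg _ _
    have hfst : ∀ j, (play (j+1)).1 = pathMove n (play j).1 (play j).2 := fun _ => rfl
    -- the invariant
    have hInv : ∀ j,
        (stepRel G ((play j).1 0) (predF (play j).2) ∧
         stepRel G ((play j).1 1) (succF (play j).2)) ∨
        (((play j).1 0).val + 2 = ((play j).1 1).val ∧
          (((play j).1 0).val + 1 ≤ ((play j).2).val ∨ ((play j).1 0).val = 0) ∧
          j ≤ ((play j).1 0).val) := by
      intro j
      induction j with
      | zero =>
        right
        refine ⟨?_, Or.inr ?_, ?_⟩ <;> simp [hplay, gamePlay]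
      | succ j ih =>
        by_cases hr : stepRel G ((play j).1 0) (predF (play j).2) ∧
            stepRel G ((play j).1 1) (succF (play j).2)
        · left
          rw [hfst j, hmove_pos _ _ hr]
          have := hTT _ _ (hstep_play j)
          constructor
          · simpa using this.1
          · simpa using this.2
        · rcases ih with h | ⟨hA, hB, hC⟩
          · exact absurd h hr
          have hfar : ((play j).1 0).val + 3 ≤ ((play j).2).val := by
            by_cases hclose : ((play j).2).val ≤ ((play j).1 0).val + 2
            · exact absurd (hL2 _ _ hA hB hclose) hr
            · omega
          have hplt := ((play j).2).isLt
          have hbs0 : ((play (j+1)).1 0) = shiftF ((play j).1 0) := by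
            rw [hfst j, hmove_neg _ _ hr]
          have hbs1 : ((play (j+1)).1 1) = shiftF ((play j).1 1) := by
            rw [hfst j, hmove_neg _ _ hr]
          have hv0 : ((play (j+1)).1 0).val = ((play j).1 0).val + 1 := by
            rw [hbs0, shiftF_val, if_pos (by omega)]
          have hv1 : ((play (j+1)).1 1).val = ((play j).1 1).val + 1 := by
            rw [hbs1, shiftF_val, if_pos (by omega)]
          have hpstep := hstep_play j
          rw [hG, pstep_iff] at hpstep
          right
          exact ⟨by omega, by omega, by omega⟩
    -- after n rounds the guards are always ready, hence cover
    refine ⟨n, fun j hj v hv => ?_⟩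
    have hready : stepRel G ((play j).1 0) (predF (play j).2) ∧
        stepRel G ((play j).1 1) (succF (play j).2) := by
      rcases hInv j with h | ⟨_, _, hC⟩
      · exact h
      · have := (((play j)).1 0).isLt; omega
    rw [hfst j, hmove_pos _ _ hready]
    rw [hG, SimpleGraph.pathGraph_adj] at hv
    have hplt := ((play j).2).isLt
    rcases hv with h | h
    · refine ⟨1, ?_⟩
      simp only [Matrix.cons_val_one, Matrix.cons_val_zero]
      apply Fin.ext
      rw [succF_val, if_pos (by omega)]
      omega
    · refine ⟨0, ?_⟩
      simp only [Matrix.cons_val_zero]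
      apply Fin.ext
      rw [predF_val, if_neg (by omega)]
      omega

end Path

section BigCycle

open SimpleGraph
open Fin.CommRing

/-- Residue constants in `Fin (k+6)`. -/
def CC (k : ℕ) (e : ℤ) : Fin (k+6) := ((e : ZMod (k+6)) : Fin (k+6))

lemma CC_inj {k : ℕ} {e e' : ℤ} (h : CC k e = CC k e') (h1 : e - e' ≤ 5) (h2 : e' - e ≤ 5) :
    e = e' := by
  haveI : NeZero (k+6) := ⟨by omega⟩
  have h0 : ((e - e' : ℤ) : ZMod (k+6)) = 0 := by
    push_cast
    rw [show ((e : ZMod (k+6)) = (e' : ZMod (k+6))) from h]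
    ring
  rw [ZMod.intCast_zmod_eq_zero_iff_dvd] at h0
  have := Int.eq_zero_of_abs_lt_dvd h0 (by rw [abs_lt]; constructor <;> omega)
  omega

lemma CC_add {k : ℕ} (e e' : ℤ) : CC k (e + e') = CC k e + CC k e' := by
  unfold CC; push_cast; try ring; rfl

lemma cstep_iff {k : ℕ} {a b : Fin (k+6)} :
    stepRel (cycleGraph (k+6)) a b ↔ ∃ e : ℤ, -1 ≤ e ∧ e ≤ 1 ∧ a - b = CC k e := by
  unfold stepRel
  rw [cycleGraph_adj (n := k+4)]
  constructor
  · rintro (h | h | h)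
    · exact ⟨0, by omega, by omega, by rw [h]; unfold CC; push_cast; try ring; rfl⟩
    · exact ⟨1, by omega, by omega, by rw [h]; unfold CC; push_cast; try ring; rfl⟩
    · refine ⟨-1, by omega, by omega, ?_⟩
      have : a - b = -(b - a) := by ring
      rw [this, h]; unfold CC; push_cast; try ring; rfl
  · rintro ⟨e, he1, he2, he⟩
    interval_cases e
    · right; right
      have : b - a = -(a - b) := by ring
      rw [this, he]; unfold CC; push_cast; try ring; exact neg_neg 1
    · left
      have : a = b + CC k 0 := by rw [← he]; try ring
      rw [this]; unfold CC; push_cast; try ring; exact add_zero b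
    · right; left
      rw [he]; unfold CC; push_cast; try ring; rfl

/-- Guards with positions `bs` can move to cover both neighbours of `q`. -/
def Cov {k : ℕ} (bs : Fin 2 → Fin (k+6)) (q : Fin (k+6)) : Prop :=
  (stepRel (cycleGraph (k+6)) (bs 0) (q - 1) ∧ stepRel (cycleGraph (k+6)) (bs 1) (q + 1)) ∨
  (stepRel (cycleGraph (k+6)) (bs 1) (q - 1) ∧ stepRel (cycleGraph (k+6)) (bs 0) (q + 1))

lemma cov_char {k : ℕ} (bs : Fin 2 → Fin (k+6)) (p : Fin (k+6)) (t : ℤ) :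
    Cov bs (p + CC k t) ↔
      ((∃ e, t-2 ≤ e ∧ e ≤ t ∧ bs 0 - p = CC k e) ∧
        (∃ e, t ≤ e ∧ e ≤ t+2 ∧ bs 1 - p = CC k e)) ∨
      ((∃ e, t-2 ≤ e ∧ e ≤ t ∧ bs 1 - p = CC k e) ∧
        (∃ e, t ≤ e ∧ e ≤ t+2 ∧ bs 0 - p = CC k e)) := by
  have key : ∀ x : Fin (k+6), ∀ s : ℤ,
      stepRel (cycleGraph (k+6)) x (p + CC k s) ↔
        ∃ e, s - 1 ≤ e ∧ e ≤ s + 1 ∧ x - p = CC k e := by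
    intro x s
    rw [cstep_iff]
    constructor
    · rintro ⟨e, he1, he2, he⟩
      refine ⟨e + s, by omega, by omega, ?_⟩
      have : x - p = (x - (p + CC k s)) + CC k s := by ring
      rw [this, he, CC_add]
    · rintro ⟨e, he1, he2, he⟩
      refine ⟨e - s, by omega, by omega, ?_⟩
      have : x - (p + CC k s) = (x - p) - CC k s := by ring
      rw [this, he, show e = (e - s) + s by ring, CC_add]
      ring
  have h1 : p + CC k t - 1 = p + CC k (t - 1) := by
    rw [show CC k (t-1) = CC k t + CC k (-1) by rw [← CC_add]; ring_nf]
    have : CC k (-1) = -1 := by unfold CC; push_cast; try ring; rfl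
    rw [this]; try ring
  have h2 : p + CC k t + 1 = p + CC k (t + 1) := by
    rw [CC_add]
    have : CC k 1 = 1 := by unfold CC; push_cast; try ring; rfl
    rw [this]; try ring
  unfold Cov
  rw [h1, h2, key, key, key, key]
  constructor
  · rintro (⟨h1, h2⟩ | ⟨h1, h2⟩)
    · left
      obtain ⟨e, a, b, c⟩ := h1; obtain ⟨f, d, g, i⟩ := h2
      exact ⟨⟨e, by omega, by omega, c⟩, ⟨f, by omega, by omega, i⟩⟩
    · right
      obtain ⟨e, a, b, c⟩ := h1; obtain ⟨f, d, g, i⟩ := h2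
      exact ⟨⟨e, by omega, by omega, c⟩, ⟨f, by omega, by omega, i⟩⟩
  · rintro (⟨h1, h2⟩ | ⟨h1, h2⟩)
    · left
      obtain ⟨e, a, b, c⟩ := h1; obtain ⟨f, d, g, i⟩ := h2
      exact ⟨⟨e, by omega, by omega, c⟩, ⟨f, by omega, by omega, i⟩⟩
    · right
      obtain ⟨e, a, b, c⟩ := h1; obtain ⟨f, d, g, i⟩ := h2
      exact ⟨⟨e, by omega, by omega, c⟩, ⟨f, by omega, by omega, i⟩⟩

end BigCycle

section BigCycle2

open SimpleGraph
open Fin.CommRing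

lemma half_lemma {k : ℕ} {u v : Fin (k+6)}
    (hu : ∃ e, (0:ℤ)-2 ≤ e ∧ e ≤ 0 ∧ u = CC k e) (hv : ∃ e, (0:ℤ) ≤ e ∧ e ≤ 0+2 ∧ v = CC k e)
    (hM : ((∃ e, (-1:ℤ)-2 ≤ e ∧ e ≤ -1 ∧ u = CC k e) ∧ (∃ e, (-1:ℤ) ≤ e ∧ e ≤ -1+2 ∧ v = CC k e)) ∨
          ((∃ e, (-1:ℤ)-2 ≤ e ∧ e ≤ -1 ∧ v = CC k e) ∧ (∃ e, (-1:ℤ) ≤ e ∧ e ≤ -1+2 ∧ u = CC k e)))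
    (hP : ((∃ e, (1:ℤ)-2 ≤ e ∧ e ≤ 1 ∧ u = CC k e) ∧ (∃ e, (1:ℤ) ≤ e ∧ e ≤ 1+2 ∧ v = CC k e)) ∨
          ((∃ e, (1:ℤ)-2 ≤ e ∧ e ≤ 1 ∧ v = CC k e) ∧ (∃ e, (1:ℤ) ≤ e ∧ e ≤ 1+2 ∧ u = CC k e))) :
    u = CC k (-1) ∧ v = CC k 1 := by
  obtain ⟨e1, he1a, he1b, hue⟩ := hu
  obtain ⟨f1, hf1a, hf1b, hve⟩ := hv
  -- use hM
  have hM' : (-2 ≤ e1 ∧ e1 ≤ -1) ∧ (0 ≤ f1 ∧ f1 ≤ 1) := by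
    rcases hM with ⟨⟨e2, a2, b2, hu2⟩, ⟨f2, c2, d2, hv2⟩⟩ | ⟨⟨e2, a2, b2, hv2⟩, _⟩
    · have he : e1 = e2 := CC_inj (hue.symm.trans hu2) (by omega) (by omega)
      have hf : f1 = f2 := CC_inj (hve.symm.trans hv2) (by omega) (by omega)
      omega
    · -- v would be in [-3,-1], contradicting v in [0,2]
      have : f1 = e2 := CC_inj (hve.symm.trans hv2) (by omega) (by omega)
      omega
  -- use hP
  have hP' : e1 = -1 ∧ f1 = 1 := by
    rcases hP with ⟨⟨e3, a3, b3, hu3⟩, ⟨f3, c3, d3, hv3⟩⟩ | ⟨_, ⟨e3, a3, b3, hu3⟩⟩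
    · have he : e1 = e3 := CC_inj (hue.symm.trans hu3) (by omega) (by omega)
      have hf : f1 = f3 := CC_inj (hve.symm.trans hv3) (by omega) (by omega)
      omega
    · have : e1 = e3 := CC_inj (hue.symm.trans hu3) (by omega) (by omega)
      omega
  exact ⟨by rw [hue, hP'.1], by rw [hve, hP'.2]⟩

end BigCycle2

section BigCycle3

open SimpleGraph
open Fin.CommRing

lemma core_maintenance {k : ℕ} (bs bs' : Fin 2 → Fin (k+6)) (p : Fin (k+6))
    (hsafe : ¬ Cov bs p) (hstep : ∀ i, stepRel (cycleGraph (k+6)) (bs i) (bs' i)) :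
    ∃ q, stepRel (cycleGraph (k+6)) p q ∧ ¬ Cov bs' q := by
  by_contra hcon
  push_neg at hcon
  have hq0 : Cov bs' p := hcon p (Or.inl rfl)
  have hadj1 : (cycleGraph (k+6)).Adj p (p + 1) := by
    rw [cycleGraph_adj (n := k+4)]; right; ring_nf
  have hadjm : (cycleGraph (k+6)).Adj p (p - 1) := by
    rw [cycleGraph_adj (n := k+4)]; left; ring_nf
  have hq1 : Cov bs' (p + CC k 1) := by
    have : p + CC k 1 = p + 1 := by
      have : CC k 1 = 1 := by unfold CC; push_cast; try ring; rfl
      rw [this]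
    rw [this]; exact hcon (p + 1) (Or.inr hadj1)
  have hqm : Cov bs' (p + CC k (-1)) := by
    have : p + CC k (-1) = p - 1 := by
      have : CC k (-1) = -1 := by unfold CC; push_cast; try ring; rfl
      rw [this]; try ring
    rw [this]; exact hcon (p - 1) (Or.inr hadjm)
  have hq0' : Cov bs' (p + CC k 0) := by
    have : p + CC k 0 = p := by
      have : CC k 0 = 0 := by unfold CC; push_cast; try ring; rfl
      rw [this]; try ring
    rw [this]; exact hq0
  rw [cov_char] at hq0' hq1 hqm
  -- conclude the guards are exactly at p-1, p+1 (in one of the two orders)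
  have hfinal : (bs' 0 - p = CC k (-1) ∧ bs' 1 - p = CC k 1) ∨
      (bs' 1 - p = CC k (-1) ∧ bs' 0 - p = CC k 1) := by
    rcases hq0' with ⟨h1, h2⟩ | ⟨h1, h2⟩
    · exact Or.inl (half_lemma h1 h2 hqm hq1)
    · exact Or.inr (half_lemma h1 h2 hqm.symm hq1.symm)
  -- contradiction with safety at the previous round
  apply hsafe
  rcases hfinal with ⟨h1, h2⟩ | ⟨h1, h2⟩
  · left
    constructor
    · have : bs' 0 = p - 1 := by
        have hc : CC k (-1) = -1 := by unfold CC; push_cast; try ring; rfl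
        rw [hc] at h1
        have := sub_eq_iff_eq_add.mp h1
        rw [this]; try ring
      rw [← this]; exact hstep 0
    · have : bs' 1 = p + 1 := by
        have hc : CC k 1 = 1 := by unfold CC; push_cast; try ring; rfl
        rw [hc] at h2
        have := sub_eq_iff_eq_add.mp h2
        rw [this]; try ring
      rw [← this]; exact hstep 1
  · right
    constructor
    · have : bs' 1 = p - 1 := by
        have hc : CC k (-1) = -1 := by unfold CC; push_cast; try ring; rfl
        rw [hc] at h1
        have := sub_eq_iff_eq_add.mp h1
        rw [this]; try ring
      rw [← this]; exact hstep 1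
    · have : bs' 0 = p + 1 := by
        have hc : CC k 1 = 1 := by unfold CC; push_cast; try ring; rfl
        rw [hc] at h2
        have := sub_eq_iff_eq_add.mp h2
        rw [this]; try ring
      rw [← this]; exact hstep 0

lemma exists_safe {k : ℕ} (bs : Fin 2 → Fin (k+6)) : ∃ p, ¬ Cov bs p := by
  refine ⟨bs 0 + CC k 3, ?_⟩
  intro hcov
  have h0 : bs 0 - (bs 0 + CC k 3) = CC k (-3) := by
    rw [show CC k (-3) = -CC k 3 by unfold CC; push_cast; try ring; rfl]; try ring
  rcases hcov with ⟨h1, _⟩ | ⟨_, h2⟩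
  · rw [cstep_iff] at h1
    obtain ⟨e, he1, he2, he⟩ := h1
    have : bs 0 - (bs 0 + CC k 3 - 1) = CC k (e) := he
    have h2 : bs 0 - (bs 0 + CC k 3 - 1) = CC k (-2) := by
      rw [show CC k (-2) = -CC k 3 + 1 by
        rw [show (-2:ℤ) = -3 + 1 by norm_num, CC_add]; unfold CC; push_cast; rfl]; try ring
    have := CC_inj (this.symm.trans h2) (by omega) (by omega)
    omega
  · rw [cstep_iff] at h2
    obtain ⟨e, he1, he2, he⟩ := h2
    have h2' : bs 0 - (bs 0 + CC k 3 + 1) = CC k (-4) := by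
      rw [show CC k (-4) = -CC k 3 - 1 by
        rw [show (-4:ℤ) = -3 + -1 by norm_num, CC_add, sub_eq_add_neg]; unfold CC; push_cast; rfl]; try ring
    have := CC_inj (he.symm.trans h2') (by omega) (by omega)
    omega

lemma not_bodyguardsWin_bigCycle (k : ℕ) : ¬ BodyguardsWin (cycleGraph (k+6)) 2 := by
  classical
  rintro ⟨binit, bmove, hleg, hwin⟩
  set G := cycleGraph (k+6) with hG
  set pinit : (Fin 2 → Fin (k+6)) → Fin (k+6) := fun bs => (exists_safe bs).choose with hpinit
  set pmove : (Fin 2 → Fin (k+6)) → Fin (k+6) → Fin (k+6) := fun bs p =>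
    if h : ∃ q, stepRel G p q ∧ ¬ Cov bs q then h.choose else p with hpmove
  have hpleg : ∀ bs p, stepRel G p (pmove bs p) := by
    intro bs p
    rw [hpmove]
    by_cases h : ∃ q, stepRel G p q ∧ ¬ Cov bs q
    · simp only [dif_pos h]; exact h.choose_spec.1
    · simp only [dif_neg h]; exact Or.inl rfl
  obtain ⟨N, hN⟩ := hwin pinit pmove hpleg
  set play := gamePlay binit bmove pinit pmove with hplay
  have hsafe : ∀ nn, ¬ Cov (play nn).1 (play nn).2 := by
    intro nn
    induction nn with
    | zero => exact (exists_safe binit).choose_spec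
    | succ nn ih =>
      have hex : ∃ q, stepRel G ((play nn).2) q ∧ ¬ Cov (bmove (play nn).1 (play nn).2) q :=
        core_maintenance _ _ _ ih (fun i => hleg _ _ i)
      have h1 : (play (nn+1)).1 = bmove (play nn).1 (play nn).2 := rfl
      have h2 : (play (nn+1)).2 = pmove (bmove (play nn).1 (play nn).2) ((play nn).2) := rfl
      rw [h1, h2, hpmove]
      simp only [dif_pos hex]
      exact hex.choose_spec.2
  -- contradiction at round N
  set p := (play N).2 with hp
  have hadj1 : G.Adj p (p + 1) := by
    rw [hG, cycleGraph_adj (n := k+4)]; right; ring_nf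
  have hadjm : G.Adj p (p - 1) := by
    rw [hG, cycleGraph_adj (n := k+4)]; left; ring_nf
  obtain ⟨i, hi⟩ := hN N le_rfl (p - 1) hadjm
  obtain ⟨j, hj⟩ := hN N le_rfl (p + 1) hadj1
  have hij : i ≠ j := by
    intro hh
    rw [hh, hj] at hi
    have : CC k 2 = CC k 0 := by
      have h21 : CC k 2 = (p+1) - (p-1) := by
        rw [show CC k 2 = (1:Fin (k+6)) + 1 by
          rw [show (2:ℤ) = 1 + 1 by norm_num, CC_add]; unfold CC; push_cast; rfl]; try ring
      have h20 : CC k 0 = 0 := by unfold CC; push_cast; try ring; rfl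
      rw [h21, h20, hi]; try ring
    have := CC_inj this (by omega) (by omega)
    omega
  have hfst : (play (N+1)).1 = bmove (play N).1 (play N).2 := rfl
  apply hsafe N
  fin_cases i <;> fin_cases j <;> try exact absurd rfl hij
  · -- i = 0, j = 1
    left
    constructor
    · have := hleg (play N).1 (play N).2 0
      rw [show bmove (play N).1 (play N).2 0 = p - 1 from by rw [← hfst]; exact hi] at this
      exact this
    · have := hleg (play N).1 (play N).2 1
      rw [show bmove (play N).1 (play N).2 1 = p + 1 from by rw [← hfst]; exact hj] at this
      exact this
  · -- i = 1, j = 0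
    right
    constructor
    · have := hleg (play N).1 (play N).2 1
      rw [show bmove (play N).1 (play N).2 1 = p - 1 from by rw [← hfst]; exact hi] at this
      exact this
    · have := hleg (play N).1 (play N).2 0
      rw [show bmove (play N).1 (play N).2 0 = p + 1 from by rw [← hfst]; exact hj] at this
      exact this

lemma not_bodyguardsWin_cycle_two {m : ℕ} (hm : 6 ≤ m) : ¬ BodyguardsWin (cycleGraph m) 2 := by
  obtain ⟨k, rfl⟩ : ∃ k, m = k + 6 := ⟨m - 6, by omega⟩
  exact not_bodyguardsWin_bigCycle k

end BigCycle3

section Small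

open SimpleGraph

variable {V : Type*}

lemma stepRel_all_of_deg_le_one {G : SimpleGraph V} (hc : G.Connected)
    (huniq : ∀ v w w' : V, G.Adj v w → G.Adj v w' → w = w') (x y : V) : stepRel G x y := by
  obtain ⟨w⟩ := hc.preconnected x y
  -- strong induction on walk length
  suffices h : ∀ n (a b : V) (w : G.Walk a b), w.length = n → stepRel G a b by
    exact h w.length x y w rfl
  intro n
  induction n using Nat.strong_induction_on with
  | _ n ih =>
    intro a b w hlen
    cases w with
    | nil => exact Or.inl rfl
    | cons h q =>
      rename_i z
      cases q with
      | nil => exact Or.inr h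
      | cons h2 q2 =>
        rename_i w2
        have hw2 : w2 = a := huniq z w2 a h2 h.symm
        subst hw2
        refine ih (n - 2) ?_ _ _ q2 ?_ <;>
          simp only [Walk.length_cons] at hlen <;> omega

lemma bodyguardsWin_one_of_deg_le_one [Fintype V] (G : SimpleGraph V) [DecidableRel G.Adj] (hc : G.Connected)
    (h1 : ∀ v, G.degree v ≤ 1) : BodyguardsWin G 1 := by
  classical
  have huniq : ∀ v w w' : V, G.Adj v w → G.Adj v w' → w = w' := by
    intro v w w' hw hw'
    have := h1 v
    rw [← card_neighborFinset_eq_degree] at this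
    exact Finset.card_le_one.mp this w (by rwa [mem_neighborFinset]) w'
      (by rwa [mem_neighborFinset])
  have hall := stepRel_all_of_deg_le_one hc huniq
  have hx : Nonempty V := hc.nonempty
  set nbr : V → V := fun p => if h : ∃ w, G.Adj p w then h.choose else p with hnbr
  refine ⟨fun _ => Classical.arbitrary V, fun bs p => fun _ => nbr p, ?_, ?_⟩
  · intro bs p i; exact hall _ _
  · intro pinit pmove hpleg
    refine ⟨0, fun n _ v hv => ?_⟩
    refine ⟨0, ?_⟩
    show nbr ((gamePlay _ _ pinit pmove n).2) = v
    rw [hnbr]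
    have hex : ∃ w, G.Adj ((gamePlay _ _ pinit pmove n).2) w := ⟨v, hv⟩
    simp only [dif_pos hex]
    split_ifs with h
    · exact huniq _ _ _ h.choose_spec hv
    · exact absurd hex h

end Small

section Classify

open SimpleGraph

variable {V : Type*}

open Classical in
/-- Next vertex: a neighbour of `v` different from `u` if one exists, else stay. -/
noncomputable def nxt (G : SimpleGraph V) (u v : V) : V :=
  if h : ∃ w, G.Adj v w ∧ w ≠ u then h.choose else v

/-- The walk: `(current, previous)` pairs. -/
noncomputable def trek (G : SimpleGraph V) (v0 : V) : ℕ → V × V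
  | 0 => (v0, v0)
  | k+1 => (nxt G (trek G v0 k).2 (trek G v0 k).1, (trek G v0 k).1)

/-- Current vertex of the walk. -/
noncomputable def tk (G : SimpleGraph V) (v0 : V) (k : ℕ) : V := (trek G v0 k).1

/-- The walk can continue from position `k`. -/
def Alive (G : SimpleGraph V) (v0 : V) (k : ℕ) : Prop :=
  ∃ w, G.Adj (tk G v0 k) w ∧ w ≠ (trek G v0 k).2

variable {G : SimpleGraph V} {v0 : V}

lemma tk_zero : tk G v0 0 = v0 := rfl

lemma trek_snd (k : ℕ) : (trek G v0 (k+1)).2 = tk G v0 k := rfl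

lemma trek_snd_zero : (trek G v0 0).2 = v0 := rfl

lemma tk_succ_spec {k : ℕ} (h : Alive G v0 k) :
    G.Adj (tk G v0 k) (tk G v0 (k+1)) ∧ tk G v0 (k+1) ≠ (trek G v0 k).2 := by
  have h' : ∃ w, G.Adj (tk G v0 k) w ∧ w ≠ (trek G v0 k).2 := h
  have : tk G v0 (k+1) = nxt G (trek G v0 k).2 (tk G v0 k) := rfl
  rw [this]
  unfold nxt
  rw [dif_pos h']
  exact h'.choose_spec

lemma tk_edge {k : ℕ} (h : Alive G v0 k) : G.Adj (tk G v0 k) (tk G v0 (k+1)) :=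
  (tk_succ_spec h).1

lemma tk_nb {k : ℕ} (h : Alive G v0 (k+1)) : tk G v0 (k+2) ≠ tk G v0 k := by
  have := (tk_succ_spec h).2
  rwa [trek_snd] at this

/-- With degree at most 2, two distinct neighbours are all the neighbours. -/
lemma two_nbrs [Fintype V] [DecidableRel G.Adj] {v a b w : V} (hdeg : G.degree v ≤ 2)
    (hab : a ≠ b) (ha : G.Adj v a) (hb : G.Adj v b) (hw : G.Adj v w) : w = a ∨ w = b := by
  classical
  by_contra hcon
  push_neg at hcon
  have hsub : ({a, b, w} : Finset V) ⊆ G.neighborFinset v := by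
    intro x hx
    simp only [Finset.mem_insert, Finset.mem_singleton] at hx
    rcases hx with rfl | rfl | rfl <;> rwa [SimpleGraph.mem_neighborFinset]
  have h3 : ({a, b, w} : Finset V).card = 3 := by
    rw [Finset.card_insert_of_notMem (by simp [hab, hcon.1.symm]),
      Finset.card_insert_of_notMem (by simp [hcon.2.symm])]
    rfl
  have := Finset.card_le_card hsub
  rw [h3, SimpleGraph.card_neighborFinset_eq_degree] at this
  omega

/-- One neighbour at most. -/
lemma uniq_nbr [Fintype V] [DecidableRel G.Adj] {v w w' : V} (hdeg : G.degree v ≤ 1)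
    (hw : G.Adj v w) (hw' : G.Adj v w') : w = w' := by
  have h2 : (G.neighborFinset v).card ≤ 1 := by
    rw [SimpleGraph.card_neighborFinset_eq_degree]; omega
  exact Finset.card_le_one.mp h2 w (by rwa [SimpleGraph.mem_neighborFinset]) w'
    (by rwa [SimpleGraph.mem_neighborFinset])

/-- Injectivity of the walk in the path case. -/
lemma path_inj [Fintype V] [DecidableRel G.Adj] (hdeg : ∀ v, G.degree v ≤ 2)
    (hv0 : G.degree v0 ≤ 1) {J : ℕ} (hA : ∀ j < J, Alive G v0 j) :
    ∀ b ≤ J, ∀ a < b, tk G v0 a ≠ tk G v0 b := by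
  intro b
  induction b using Nat.strong_induction_on with
  | _ b IH =>
    intro hbJ a hab hcol
    obtain ⟨b', rfl⟩ : ∃ b', b = b' + 1 := ⟨b - 1, by omega⟩
    have hedge : G.Adj (tk G v0 b') (tk G v0 (b'+1)) := tk_edge (hA b' (by omega))
    rcases Nat.eq_zero_or_pos a with rfl | ha1
    · -- collision with the start
      rw [tk_zero] at hcol
      rcases Nat.lt_or_ge b' 1 with hb' | hb'
      · interval_cases b'
        rw [← hcol, tk_zero] at hedge
        exact G.irrefl hedge
      · have hadj1 : G.Adj v0 (tk G v0 1) := by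
          have := tk_edge (hA 0 (by omega))
          rwa [tk_zero] at this
        have hadjb : G.Adj v0 (tk G v0 b') := by
          have := hedge.symm
          rwa [← hcol] at this
        have heq : tk G v0 1 = tk G v0 b' := uniq_nbr hv0 hadj1 hadjb
        rcases Nat.lt_or_ge b' 2 with hb2 | hb2
        · -- b' = 1, b = 2
          interval_cases b'
          exact tk_nb (k := 0) (hA 1 (by omega)) (by rw [tk_zero]; exact hcol.symm)
        · exact IH b' (by omega) (by omega) 1 (by omega) heq
    · -- interior collision
      obtain ⟨a', rfl⟩ : ∃ a', a = a' + 1 := ⟨a - 1, by omega⟩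
      have hea : G.Adj (tk G v0 a') (tk G v0 (a'+1)) := tk_edge (hA a' (by omega))
      have hea2 : G.Adj (tk G v0 (a'+1)) (tk G v0 (a'+2)) := tk_edge (hA (a'+1) (by omega))
      have hne : tk G v0 (a'+2) ≠ tk G v0 a' := tk_nb (hA (a'+1) (by omega))
      have hadjb : G.Adj (tk G v0 (a'+1)) (tk G v0 b') := by
        have := hedge.symm
        rwa [← hcol] at this
      rcases two_nbrs (hdeg _) (fun h => hne h.symm) hea.symm hea2 hadjb with hcase | hcase
      · -- tk b' = tk a'
        exact IH b' (by omega) (by omega) a' (by omega) hcase.symm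
      · -- tk b' = tk (a'+2)
        rcases Nat.lt_trichotomy (a'+2) b' with h3 | h3 | h3
        · exact IH b' (by omega) (by omega) (a'+2) (by omega) hcase.symm
        · -- b = a + 2
          subst h3
          exact tk_nb (k := a'+1) (hA (a'+2) (by omega)) hcol.symm
        · -- b = a + 1
          have : a' + 2 = b' + 1 := by omega
          have hb : b' = a' + 1 := by omega
          subst hb
          rw [← hcol] at hedge
          exact G.irrefl hedge

/-- In the all-degree-two case: every collision yields a return to the start. -/
lemma cycle_ret [Fintype V] [DecidableRel G.Adj] (hdeg : ∀ v, G.degree v ≤ 2)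
    (hA : ∀ j, Alive G v0 j) :
    ∀ b, ∀ a < b, tk G v0 a = tk G v0 b → ∃ c, 1 ≤ c ∧ c ≤ b ∧ tk G v0 c = tk G v0 0 := by
  intro b
  induction b using Nat.strong_induction_on with
  | _ b IH =>
    intro a hab hcol
    obtain ⟨b', rfl⟩ : ∃ b', b = b' + 1 := ⟨b - 1, by omega⟩
    have hedge : G.Adj (tk G v0 b') (tk G v0 (b'+1)) := tk_edge (hA b')
    rcases Nat.eq_zero_or_pos a with rfl | ha1
    · exact ⟨b' + 1, by omega, le_rfl, hcol.symm⟩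
    · obtain ⟨a', rfl⟩ : ∃ a', a = a' + 1 := ⟨a - 1, by omega⟩
      have hea : G.Adj (tk G v0 a') (tk G v0 (a'+1)) := tk_edge (hA a')
      have hea2 : G.Adj (tk G v0 (a'+1)) (tk G v0 (a'+2)) := tk_edge (hA (a'+1))
      have hne : tk G v0 (a'+2) ≠ tk G v0 a' := tk_nb (hA (a'+1))
      have hadjb : G.Adj (tk G v0 (a'+1)) (tk G v0 b') := by
        have := hedge.symm
        rwa [← hcol] at this
      rcases two_nbrs (hdeg _) (fun h => hne h.symm) hea.symm hea2 hadjb with hcase | hcase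
      · obtain ⟨c, hc1, hc2, hc3⟩ := IH b' (by omega) a' (by omega) hcase.symm
        exact ⟨c, hc1, by omega, hc3⟩
      · rcases Nat.lt_trichotomy (a'+2) b' with h3 | h3 | h3
        · obtain ⟨c, hc1, hc2, hc3⟩ := IH b' (by omega) (a'+2) (by omega) hcase.symm
          exact ⟨c, hc1, by omega, hc3⟩
        · subst h3
          exact (tk_nb (k := a'+1) (hA (a'+2)) hcol.symm).elim
        · have hb : b' = a' + 1 := by omega
          subst hb
          exact (G.irrefl (by rw [hcol] at hedge; exact hedge)).elim

/-- Closure under adjacency plus connectivity gives everything. -/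
lemma closure_all {G : SimpleGraph V} (hc : G.Connected) {S : Set V} {v0 : V} (hv0 : v0 ∈ S)
    (hcl : ∀ a ∈ S, ∀ b, G.Adj a b → b ∈ S) : ∀ v, v ∈ S := by
  intro v
  obtain ⟨w⟩ := hc.preconnected v0 v
  clear hc
  induction w with
  | nil => exact hv0
  | cons h q ih => exact ih (hcl _ hv0 _ h)

end Classify

section ClassifyPath

open SimpleGraph

variable {V : Type*} [Fintype V] {G : SimpleGraph V} [DecidableRel G.Adj] {v0 : V}

lemma exists_dead (hdeg : ∀ v, G.degree v ≤ 2) (hv0 : G.degree v0 ≤ 1) :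
    ∃ j, ¬ Alive G v0 j := by
  by_contra hall
  push_neg at hall
  have hinj : Function.Injective (fun i : Fin (Fintype.card V + 1) => tk G v0 i.val) := by
    intro i j hij
    simp only [] at hij
    rcases Nat.lt_trichotomy i.val j.val with h | h | h
    · exact absurd hij (path_inj hdeg hv0 (J := Fintype.card V + 1)
        (fun j _ => hall j) j.val (by omega) i.val h)
    · exact Fin.ext h
    · exact absurd hij.symm (path_inj hdeg hv0 (J := Fintype.card V + 1)
        (fun j _ => hall j) i.val (by omega) j.val h)
  have := Fintype.card_le_of_injective _ hinj
  rw [Fintype.card_fin] at this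
  omega

lemma classify_path (hc : G.Connected) (hdeg : ∀ v, G.degree v ≤ 2)
    (hv0 : G.degree v0 ≤ 1) : ∃ n, Nonempty (G ≃g SimpleGraph.pathGraph n) := by
  classical
  obtain hLex := exists_dead hdeg hv0
  set L := Nat.find hLex with hLdef
  have hL : ¬ Alive G v0 L := Nat.find_spec hLex
  have hAL : ∀ j < L, Alive G v0 j := fun j hj => of_not_not (Nat.find_min hLex hj)
  have hLdead : ∀ w, G.Adj (tk G v0 L) w → w = (trek G v0 L).2 := by
    intro w hw
    by_contra hne
    exact hL ⟨w, hw, hne⟩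
  have hinj : ∀ a b, a ≤ L → b ≤ L → tk G v0 a = tk G v0 b → a = b := by
    intro a b ha hb hab
    rcases Nat.lt_trichotomy a b with h | h | h
    · exact absurd hab (path_inj hdeg hv0 hAL b hb a h)
    · exact h
    · exact absurd hab.symm (path_inj hdeg hv0 hAL a ha b h)
  -- neighbour classification
  have hnb : ∀ i ≤ L, ∀ w, G.Adj (tk G v0 i) w →
      (1 ≤ i ∧ w = tk G v0 (i-1)) ∨ (i < L ∧ w = tk G v0 (i+1)) := by
    intro i hi w hw
    rcases Nat.eq_zero_or_pos i with rfl | hi1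
    · rcases Nat.eq_zero_or_pos L with hL0 | hL1
      · -- dead at the start : no neighbours at all
        exfalso
        have h2 : w = (trek G v0 0).2 := by rw [← hL0]; exact hLdead w (by rwa [hL0])
        rw [trek_snd_zero] at h2
        subst h2
        rw [tk_zero] at hw
        exact G.irrefl hw
      · right
        refine ⟨hL1, ?_⟩
        have hadj1 : G.Adj (tk G v0 0) (tk G v0 1) := tk_edge (hAL 0 hL1)
        exact uniq_nbr hv0 hw hadj1
    · obtain ⟨i', rfl⟩ : ∃ i', i = i' + 1 := ⟨i - 1, by omega⟩
      rcases Nat.lt_or_ge (i'+1) L with hiL | hiL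
      · -- interior
        have hea : G.Adj (tk G v0 (i'+1)) (tk G v0 i') := (tk_edge (hAL i' (by omega))).symm
        have hea2 : G.Adj (tk G v0 (i'+1)) (tk G v0 (i'+2)) := tk_edge (hAL (i'+1) hiL)
        have hne : tk G v0 (i'+2) ≠ tk G v0 i' := tk_nb (hAL (i'+1) hiL)
        rcases two_nbrs (hdeg _) (fun h => hne h.symm) hea hea2 hw with h | h
        · exact Or.inl ⟨by omega, by simpa using h⟩
        · exact Or.inr ⟨hiL, by simpa using h⟩
      · -- i = L
        have hiL' : i' + 1 = L := by omega
        left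
        refine ⟨by omega, ?_⟩
        have := hLdead w (by rwa [hiL'] at hw)
        rw [this, ← hiL', trek_snd]
        simp
  -- surjectivity
  have hsurj : ∀ v, ∃ i, i ≤ L ∧ tk G v0 i = v := by
    have := closure_all hc (S := {v | ∃ i, i ≤ L ∧ tk G v0 i = v})
      (v0 := v0) ⟨0, by omega, tk_zero⟩ ?_
    · exact this
    · rintro a ⟨i, hi, rfl⟩ b hb
      rcases hnb i hi b hb with ⟨h1, rfl⟩ | ⟨h1, rfl⟩
      · exact ⟨i-1, by omega, rfl⟩
      · exact ⟨i+1, by omega, rfl⟩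
  have hbij : Function.Bijective (fun i : Fin (L+1) => tk G v0 i.val) := by
    constructor
    · intro i j hij
      exact Fin.ext (hinj i.val j.val (by omega) (by omega) hij)
    · intro v
      obtain ⟨i, hi, hv⟩ := hsurj v
      exact ⟨⟨i, by omega⟩, hv⟩
  refine ⟨L+1, ⟨(RelIso.mk (Equiv.ofBijective _ hbij) ?_).symm⟩⟩
  intro i j
  show G.Adj (tk G v0 i.val) (tk G v0 j.val) ↔ (SimpleGraph.pathGraph (L+1)).Adj i j
  rw [SimpleGraph.pathGraph_adj]
  constructor
  · intro hadj
    have hiv := i.isLt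
    have hjv := j.isLt
    rcases hnb i.val (by omega) _ hadj with ⟨h1, heq⟩ | ⟨h1, heq⟩
    · have := hinj j.val (i.val - 1) (by omega) (by omega) heq
      omega
    · have := hinj j.val (i.val + 1) (by omega) (by omega) heq
      omega
  · intro hadj
    have hiv := i.isLt
    have hjv := j.isLt
    rcases hadj with h | h
    · have := tk_edge (hAL i.val (by omega))
      rwa [show i.val + 1 = j.val from h] at this
    · have := (tk_edge (hAL j.val (by omega))).symm
      rwa [show j.val + 1 = i.val from h] at this

end ClassifyPath

section ClassifyCycle

open SimpleGraph

lemma cycleGraph_adj_val {L : ℕ} (hL : 3 ≤ L) (i j : Fin L) :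
    (SimpleGraph.cycleGraph L).Adj i j ↔
      (i.val + 1 = j.val ∨ j.val + 1 = i.val ∨
        (i.val = 0 ∧ j.val = L - 1) ∨ (j.val = 0 ∧ i.val = L - 1)) := by
  have hmod : ∀ x y : ℕ, x < L → y < L → ((L - y + x) % L) = if x < y then x + L - y else x - y := by
    intro x y hx hy
    rcases Nat.lt_or_ge x y with h | h
    · rw [if_pos h, Nat.mod_eq_of_lt (by omega)]
      omega
    · rw [if_neg (by omega), show L - y + x = (x - y) + L by omega, Nat.add_mod_right,
        Nat.mod_eq_of_lt (by omega)]
  rw [SimpleGraph.cycleGraph_adj']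
  rw [Fin.sub_def, Fin.sub_def]
  simp only []
  rw [hmod i.val j.val i.isLt j.isLt, hmod j.val i.val j.isLt i.isLt]
  have hi := i.isLt; have hj := j.isLt
  split_ifs <;> omega

variable {V : Type*} [Fintype V] {G : SimpleGraph V} [DecidableRel G.Adj] {v0 : V}

lemma alive_all (hdeg2 : ∀ v, G.degree v = 2) : ∀ j, Alive G v0 j := by
  classical
  intro j
  have h2 : (G.neighborFinset (tk G v0 j)).card = 2 := by
    rw [SimpleGraph.card_neighborFinset_eq_degree]; exact hdeg2 _
  obtain ⟨a, b, hab, hset⟩ := Finset.card_eq_two.mp h2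
  have ha : G.Adj (tk G v0 j) a := by
    rw [← SimpleGraph.mem_neighborFinset, hset]; simp
  have hb : G.Adj (tk G v0 j) b := by
    rw [← SimpleGraph.mem_neighborFinset, hset]; simp
  by_cases hpa : a = (trek G v0 j).2
  · exact ⟨b, hb, by rw [← hpa]; exact fun h => hab h.symm⟩
  · exact ⟨a, ha, hpa⟩

lemma classify_cycle (hc : G.Connected) (hdeg2 : ∀ v, G.degree v = 2) (v0 : V) :
    ∃ m, 3 ≤ m ∧ Nonempty (G ≃g SimpleGraph.cycleGraph m) := by
  classical
  have hdeg : ∀ v, G.degree v ≤ 2 := fun v => le_of_eq (hdeg2 v)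
  have hA : ∀ j, Alive G v0 j := alive_all hdeg2
  -- existence of a return
  have hret : ∃ c, 1 ≤ c ∧ tk G v0 c = tk G v0 0 := by
    -- pigeonhole gives a collision
    have : ¬ Function.Injective (fun i : Fin (Fintype.card V + 1) => tk G v0 i.val) := by
      intro hinj
      have := Fintype.card_le_of_injective _ hinj
      rw [Fintype.card_fin] at this
      omega
    rw [Function.not_injective_iff] at this
    obtain ⟨i, j, hij, hne⟩ := this
    rcases Nat.lt_trichotomy i.val j.val with h | h | h
    · obtain ⟨c, hc1, _, hc3⟩ := cycle_ret hdeg hA j.val i.val h hij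
      exact ⟨c, hc1, hc3⟩
    · exact absurd (Fin.ext h) hne
    · obtain ⟨c, hc1, _, hc3⟩ := cycle_ret hdeg hA i.val j.val h hij.symm
      exact ⟨c, hc1, hc3⟩
  have hretE : ∃ c, 1 ≤ c ∧ tk G v0 c = tk G v0 0 := hret
  set L := Nat.find hretE with hLdef
  obtain ⟨hL1, hLret⟩ := Nat.find_spec hretE
  rw [← hLdef] at hL1 hLret
  have hmin : ∀ c, 1 ≤ c → tk G v0 c = tk G v0 0 → L ≤ c := by
    intro c h1 h2
    by_contra hlt
    rw [hLdef] at hlt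
    exact Nat.find_min hretE (by omega) ⟨h1, h2⟩
  clear hLdef
  -- L ≥ 3
  have hL3 : 3 ≤ L := by
    by_contra hlt
    push_neg at hlt
    have h12 : L = 1 ∨ L = 2 := by omega
    rcases h12 with h1 | h1
    · rw [h1] at hLret
      have := tk_edge (hA 0)
      rw [show (0:ℕ)+1 = 1 from rfl, hLret] at this
      exact G.irrefl this
    · rw [h1] at hLret
      exact tk_nb (k := 0) (hA 1) hLret
  -- injectivity below L
  have hinj : ∀ a b, a ≤ L - 1 → b ≤ L - 1 → tk G v0 a = tk G v0 b → a = b := by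
    intro a b ha hb hab
    rcases Nat.lt_trichotomy a b with h | h | h
    · exfalso
      obtain ⟨c, hc1, hc2, hc3⟩ := cycle_ret hdeg hA b a h hab
      have := hmin c hc1 hc3
      omega
    · exact h
    · exfalso
      obtain ⟨c, hc1, hc2, hc3⟩ := cycle_ret hdeg hA a b h hab.symm
      have := hmin c hc1 hc3
      omega
  -- neighbour classification
  have hwrap : G.Adj (tk G v0 0) (tk G v0 (L-1)) := by
    have := (tk_edge (hA (L-1))).symm
    rwa [show L - 1 + 1 = L from by omega, hLret] at this
  have hnb : ∀ i ≤ L - 1, ∀ w, G.Adj (tk G v0 i) w →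
      (w = tk G v0 (i-1) ∨ w = tk G v0 (i+1)) ∨
      (i = 0 ∧ w = tk G v0 (L-1)) ∨ (i = L - 1 ∧ w = tk G v0 0) := by
    intro i hi w hw
    rcases Nat.eq_zero_or_pos i with rfl | hi1
    · -- neighbours of the start : tk 1 and tk (L-1)
      have h1 : G.Adj (tk G v0 0) (tk G v0 1) := tk_edge (hA 0)
      have hne : tk G v0 1 ≠ tk G v0 (L-1) := by
        intro h
        have := hinj 1 (L-1) (by omega) (by omega) h
        omega
      rcases two_nbrs (hdeg _) hne h1 hwrap hw with h | h
      · exact Or.inl (Or.inr h)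
      · exact Or.inr (Or.inl ⟨rfl, h⟩)
    · obtain ⟨i', rfl⟩ : ∃ i', i = i' + 1 := ⟨i - 1, by omega⟩
      rcases Nat.lt_or_ge (i'+1) (L-1) with hiL | hiL
      · have hea : G.Adj (tk G v0 (i'+1)) (tk G v0 i') := (tk_edge (hA i')).symm
        have hea2 : G.Adj (tk G v0 (i'+1)) (tk G v0 (i'+2)) := tk_edge (hA (i'+1))
        have hne : tk G v0 (i'+2) ≠ tk G v0 i' := tk_nb (hA (i'+1))
        rcases two_nbrs (hdeg _) (fun h => hne h.symm) hea hea2 hw with h | h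
        · exact Or.inl (Or.inl (by simpa using h))
        · exact Or.inl (Or.inr (by simpa using h))
      · -- i = L - 1
        have hiL' : i' + 1 = L - 1 := by omega
        have hea : G.Adj (tk G v0 (i'+1)) (tk G v0 i') := (tk_edge (hA i')).symm
        have h0 : G.Adj (tk G v0 (i'+1)) (tk G v0 0) := by
          rw [hiL']; exact hwrap.symm
        have hne : tk G v0 i' ≠ tk G v0 0 := by
          intro h
          have := hinj i' 0 (by omega) (by omega) h
          omega
        rcases two_nbrs (hdeg _) hne hea h0 hw with h | h
        · exact Or.inl (Or.inl (by simpa using h))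
        · exact Or.inr (Or.inr ⟨hiL', h⟩)
  -- surjectivity
  have hsurj : ∀ v, ∃ i, i ≤ L - 1 ∧ tk G v0 i = v := by
    have := closure_all hc (S := {v | ∃ i, i ≤ L - 1 ∧ tk G v0 i = v})
      (v0 := v0) ⟨0, by omega, tk_zero⟩ ?_
    · exact this
    · rintro a ⟨i, hi, rfl⟩ b hb
      rcases hnb i hi b hb with (rfl | rfl) | (⟨h0, rfl⟩ | ⟨h0, rfl⟩)
      · exact ⟨i-1, by omega, rfl⟩
      · rcases Nat.lt_or_ge (i+1) L with h | h
        · exact ⟨i+1, by omega, rfl⟩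
        · exact ⟨0, by omega, by rw [show i+1 = L from by omega]; exact hLret.symm⟩
      · exact ⟨L-1, by omega, rfl⟩
      · exact ⟨0, by omega, rfl⟩
  -- the isomorphism
  have hbij : Function.Bijective (fun i : Fin L => tk G v0 i.val) := by
    constructor
    · intro i j hij
      have hi := i.isLt; have hj := j.isLt
      exact Fin.ext (hinj i.val j.val (by omega) (by omega) hij)
    · intro v
      obtain ⟨i, hi, hv⟩ := hsurj v
      exact ⟨⟨i, by omega⟩, hv⟩
  refine ⟨L, hL3, ⟨(RelIso.mk (Equiv.ofBijective _ hbij) ?_).symm⟩⟩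
  intro i j
  show G.Adj (tk G v0 i.val) (tk G v0 j.val) ↔ (SimpleGraph.cycleGraph L).Adj i j
  rw [cycleGraph_adj_val hL3]
  have hi := i.isLt; have hj := j.isLt
  constructor
  · intro hadj
    rcases hnb i.val (by omega) _ hadj with (heq | heq) | (⟨h0, heq⟩ | ⟨h0, heq⟩)
    · -- j = i - 1 : but beware i = 0 gives tk (0-1) = tk 0, impossible by irrefl
      have hne0 : i.val ≠ 0 := by
        intro h0
        rw [h0] at heq
        rw [heq, h0] at hadj
        exact G.irrefl hadj
      have := hinj j.val (i.val - 1) (by omega) (by omega) heq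
      omega
    · -- j = i + 1, possibly wrapping
      rcases Nat.lt_or_ge (i.val+1) L with h | h
      · have := hinj j.val (i.val + 1) (by omega) (by omega) heq
        omega
      · -- i = L-1 : tk (i+1) = tk L = tk 0
        have heq0 : tk G v0 j.val = tk G v0 0 := by
          rw [heq, show i.val+1 = L from by omega]; exact hLret
        have := hinj j.val 0 (by omega) (by omega) heq0
        omega
    · have := hinj j.val (L-1) (by omega) (by omega) heq
      omega
    · have := hinj j.val 0 (by omega) (by omega) heq
      omega
  · intro hadj
    rcases hadj with h | h | ⟨h1, h2⟩ | ⟨h1, h2⟩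
    · have := tk_edge (hA i.val)
      rwa [show i.val + 1 = j.val from h] at this
    · have := (tk_edge (hA j.val)).symm
      rwa [show j.val + 1 = i.val from h] at this
    · rw [h1, h2]
      exact hwrap
    · rw [h1, h2]
      exact hwrap.symm

end ClassifyCycle

section MainAux

open SimpleGraph

lemma classify_graph {V : Type*} [Fintype V] (G : SimpleGraph V) [DecidableRel G.Adj]
    (hc : G.Connected) (hdeg : ∀ v, G.degree v ≤ 2) :
    (∃ n, Nonempty (G ≃g SimpleGraph.pathGraph n)) ∨
    (∃ m, 3 ≤ m ∧ Nonempty (G ≃g SimpleGraph.cycleGraph m)) := by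
  by_cases h : ∃ v0, G.degree v0 ≤ 1
  · obtain ⟨v0, hv0⟩ := h
    exact Or.inl (classify_path hc hdeg hv0)
  · push_neg at h
    have hdeg2 : ∀ v, G.degree v = 2 := fun v => le_antisymm (hdeg v) (h v)
    have : Nonempty V := hc.nonempty
    exact Or.inr (classify_cycle hc hdeg2 (Classical.arbitrary V))

end MainAux

/-- For a connected graph `G`, `B(G) = 2` iff `G` is isomorphic to a path `P_n` with
`n ≥ 3`, or to a cycle `C_m` with `3 ≤ m ≤ 5`. -/
theorem bodyguardNumber_eq_two_iff {V : Type*} [Fintype V] (G : SimpleGraph V)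
    (hc : G.Connected) :
    bodyguardNumber G = 2 ↔
      (∃ n, 3 ≤ n ∧ Nonempty (G ≃g SimpleGraph.pathGraph n)) ∨
      (∃ m, 3 ≤ m ∧ m ≤ 5 ∧ Nonempty (G ≃g SimpleGraph.cycleGraph m)) := by
  classical
  letI : DecidableRel G.Adj := fun a b => Classical.dec _
  constructor
  · intro h2
    have hSne : {k | BodyguardsWin G k}.Nonempty := by
      by_contra hje
      rw [Set.not_nonempty_iff_eq_empty] at hje
      rw [bodyguardNumber, hje, Nat.sInf_empty] at h2
      omega
    have h2S : BodyguardsWin G 2 := by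
      have := Nat.sInf_mem hSne
      rwa [show sInf {k | BodyguardsWin G k} = bodyguardNumber G from rfl, h2] at this
    have hnot1 : ¬ BodyguardsWin G 1 := by
      intro hcon
      have : bodyguardNumber G ≤ 1 := Nat.sInf_le hcon
      omega
    have hdeg : ∀ v, G.degree v ≤ 2 := degree_le_of_bodyguardsWin G h2S
    have hdeg2v : ∃ v, G.degree v = 2 := by
      by_contra hno
      push_neg at hno
      have hall1 : ∀ v, G.degree v ≤ 1 := by
        intro v
        have h1 := hdeg v
        have h2' := hno v
        omega
      exact hnot1 (bodyguardsWin_one_of_deg_le_one G hc hall1)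
    rcases classify_graph G hc hdeg with ⟨n, ⟨e⟩⟩ | ⟨m, hm3, ⟨e⟩⟩
    · left
      refine ⟨n, ?_, ⟨e⟩⟩
      by_contra hn3
      push_neg at hn3
      obtain ⟨v, hv⟩ := hdeg2v
      have h2c : (G.neighborFinset v).card = 2 := by
        rw [SimpleGraph.card_neighborFinset_eq_degree]; exact hv
      obtain ⟨a, b, hab, hset⟩ := Finset.card_eq_two.mp h2c
      have ha : G.Adj v a := by rw [← SimpleGraph.mem_neighborFinset, hset]; simp
      have hb : G.Adj v b := by rw [← SimpleGraph.mem_neighborFinset, hset]; simp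
      have hA : (SimpleGraph.pathGraph n).Adj (e v) (e a) := e.map_rel_iff.mpr ha
      have hB : (SimpleGraph.pathGraph n).Adj (e v) (e b) := e.map_rel_iff.mpr hb
      rw [SimpleGraph.pathGraph_adj] at hA hB
      have hne : e a ≠ e b := fun hh => hab (e.injective hh)
      have h1 := (e v).isLt
      have h2' := (e a).isLt
      have h3 := (e b).isLt
      have : (e a).val = (e b).val := by omega
      exact hne (Fin.ext this)
    · right
      refine ⟨m, hm3, ?_, ⟨e⟩⟩
      by_contra hm5
      push_neg at hm5
      exact not_bodyguardsWin_cycle_two (by omega) (BodyguardsWin.of_iso e.symm h2S)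
  · intro h
    have h2S : BodyguardsWin G 2 := by
      rcases h with ⟨n, hn, ⟨e⟩⟩ | ⟨m, hm3, hm5, ⟨e⟩⟩
      · exact BodyguardsWin.of_iso e (bodyguardsWin_path_two hn)
      · exact BodyguardsWin.of_iso e (bodyguardsWin_cycle_two hm3 hm5)
    have hdegv : ∃ v w w', G.Adj v w ∧ G.Adj v w' ∧ w ≠ w' := by
      rcases h with ⟨n, hn, ⟨e⟩⟩ | ⟨m, hm3, hm5, ⟨e⟩⟩
      · refine ⟨e.symm ⟨1, by omega⟩, e.symm ⟨0, by omega⟩, e.symm ⟨2, by omega⟩, ?_, ?_, ?_⟩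
        · exact e.symm.map_rel_iff.mpr (by rw [SimpleGraph.pathGraph_adj]; right; rfl)
        · exact e.symm.map_rel_iff.mpr (by rw [SimpleGraph.pathGraph_adj]; left; rfl)
        · intro hh
          have := e.symm.injective hh
          simp only [Fin.mk.injEq] at this
          omega
      · refine ⟨e.symm ⟨0, by omega⟩, e.symm ⟨1, by omega⟩, e.symm ⟨m-1, by omega⟩, ?_, ?_, ?_⟩
        · exact e.symm.map_rel_iff.mpr (by rw [cycleGraph_adj_val hm3]; left; rfl)
        · exact e.symm.map_rel_iff.mpr
            (by rw [cycleGraph_adj_val hm3]; right; right; left; exact ⟨rfl, rfl⟩)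
        · intro hh
          have := e.symm.injective hh
          simp only [Fin.mk.injEq] at this
          omega
    have hge : ∀ k, BodyguardsWin G k → 2 ≤ k := by
      intro k hk
      obtain ⟨v, w, w', h1, h2', h3⟩ := hdegv
      have hle := degree_le_of_bodyguardsWin G hk v
      have h2le : 2 ≤ G.degree v := by
        rw [← SimpleGraph.card_neighborFinset_eq_degree]
        have hsub : ({w, w'} : Finset V) ⊆ G.neighborFinset v := by
          intro x hx
          simp only [Finset.mem_insert, Finset.mem_singleton] at hx
          rcases hx with rfl | rfl <;> rwa [SimpleGraph.mem_neighborFinset]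
        have := Finset.card_le_card hsub
        rwa [Finset.card_pair h3] at this
      omega
    apply le_antisymm
    · exact Nat.sInf_le h2S
    · exact hge _ (Nat.sInf_mem (⟨2, h2S⟩ : {k | BodyguardsWin G k}.Nonempty))
end

section
/- For n ≥ 2, B(P_2 □ P_n) = 2 if n = 2 and B(P_2 □ P_n) = 3 if n ≥ 3. -/
open SimpleGraph

set_option linter.unusedSectionVars false
set_option linter.unusedVariables false
set_option linter.unusedTactic false
set_option maxHeartbeats 1000000

namespace BG
attribute [local instance] Classical.propDecidable
variable {n : ℕ}
abbrev VV (n : ℕ) := Fin 2 × Fin n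
abbrev GG (n : ℕ) : SimpleGraph (VV n) := pathGraph 2 □ pathGraph n

lemma adj_iff {u v : VV n} :
    (GG n).Adj u v ↔
      (((u.1:ℕ) ≠ (v.1:ℕ) ∧ (u.2:ℕ) = (v.2:ℕ)) ∨
       ((u.1:ℕ) = (v.1:ℕ) ∧ ((u.2:ℕ)+1 = (v.2:ℕ) ∨ (v.2:ℕ)+1 = (u.2:ℕ)))) := by
  rw [boxProd_adj, pathGraph_adj, pathGraph_adj]
  have h1 := u.1.is_lt; have h2 := v.1.is_lt
  simp only [Fin.ext_iff]; omega

lemma step_iff {u v : VV n} :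
    stepRel (GG n) u v ↔
      (((u.1:ℕ) = (v.1:ℕ) ∧ (u.2:ℕ) = (v.2:ℕ)) ∨
       ((u.1:ℕ) ≠ (v.1:ℕ) ∧ (u.2:ℕ) = (v.2:ℕ)) ∨
       ((u.1:ℕ) = (v.1:ℕ) ∧ ((u.2:ℕ)+1 = (v.2:ℕ) ∨ (v.2:ℕ)+1 = (u.2:ℕ)))) := by
  rw [stepRel, adj_iff, Prod.ext_iff]
  simp only [Fin.ext_iff]

variable [NeZero n]

def pt (a x : ℕ) : VV n :=
  (⟨min a 1, by omega⟩, ⟨min x (n-1), by have := Nat.pos_of_ne_zero (NeZero.ne n); omega⟩)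

lemma pt_fst {a : ℕ} (ha : a < 2) (x : ℕ) : (((pt a x : VV n)).1 : ℕ) = a := by
  simp [pt]; omega

lemma pt_snd (a : ℕ) {x : ℕ} (hx : x < n) : (((pt a x : VV n)).2 : ℕ) = x := by
  simp [pt]; omega

def atv (u : VV n) (a x : ℕ) : Prop := (u.1 : ℕ) = a ∧ (u.2 : ℕ) = x

lemma atv_pt {a x : ℕ} (ha : a < 2) (hx : x < n) : atv (pt a x : VV n) a x :=
  ⟨pt_fst ha x, pt_snd a hx⟩

lemma step_to_pt {u : VV n} {a x : ℕ} (ha : a < 2) (hx : x < n) {a0 x0 : ℕ}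
    (hu : atv u a0 x0)
    (h : (a0 = a ∧ x0 = x) ∨ (a0 ≠ a ∧ x0 = x) ∨ (a0 = a ∧ (x0+1 = x ∨ x+1 = x0))) :
    stepRel (GG n) u (pt a x) := by
  rw [step_iff, pt_fst ha, pt_snd a hx, hu.1, hu.2]; exact h

lemma step_cases {p p' : VV n} (h : stepRel (GG n) p p') {b c : ℕ} (hp : atv p b c) :
    ∃ b' c', atv p' b' c' ∧ b' < 2 ∧ c' < n ∧
      ((b' = b ∧ c' = c) ∨ (b' ≠ b ∧ c' = c) ∨ (b' = b ∧ (c+1 = c' ∨ c'+1 = c))) := by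
  refine ⟨(p'.1:ℕ), (p'.2:ℕ), ⟨rfl, rfl⟩, p'.1.is_lt, p'.2.is_lt, ?_⟩
  rw [step_iff] at h
  obtain ⟨hb, hc⟩ := hp
  omega

lemma tri (i j k t : Fin 3) (hij : i ≠ j) (hik : i ≠ k) (hjk : j ≠ k) :
    t = i ∨ t = j ∨ t = k := by
  have := i.is_lt; have := j.is_lt; have := k.is_lt; have := t.is_lt
  simp only [Fin.ext_iff] at *
  omega

lemma eq_of_vals {u v : VV n} (h1 : (u.1:ℕ) = (v.1:ℕ)) (h2 : (u.2:ℕ) = (v.2:ℕ)) : u = v :=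
  Prod.ext (Fin.ext h1) (Fin.ext h2)

/-- response builder -/
def rsp (i j k : Fin 3) (ti tj tk : VV n) : Fin 3 → VV n :=
  fun t => if t = i then ti else if t = j then tj else tk

lemma rsp_i {i j k : Fin 3} {ti tj tk : VV n} : rsp i j k ti tj tk i = ti := if_pos rfl

lemma rsp_j {i j k : Fin 3} (hij : i ≠ j) {ti tj tk : VV n} : rsp i j k ti tj tk j = tj := by
  unfold rsp; rw [if_neg (Ne.symm hij), if_pos rfl]

lemma rsp_k {i j k : Fin 3} (hik : i ≠ k) (hjk : j ≠ k) {ti tj tk : VV n} :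
    rsp i j k ti tj tk k = tk := by
  unfold rsp; rw [if_neg (Ne.symm hik), if_neg (Ne.symm hjk)]

lemma rsp_steps {bs : Fin 3 → VV n} {i j k : Fin 3} (hij : i ≠ j) (hik : i ≠ k) (hjk : j ≠ k)
    {ti tj tk : VV n} (h1 : stepRel (GG n) (bs i) ti) (h2 : stepRel (GG n) (bs j) tj)
    (h3 : stepRel (GG n) (bs k) tk) :
    ∀ t, stepRel (GG n) (bs t) (rsp i j k ti tj tk t) := by
  intro t
  rcases tri i j k t hij hik hjk with rfl | rfl | rfl
  · rwa [rsp_i]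
  · rwa [rsp_j hij]
  · rwa [rsp_k hik hjk]


lemma atv_pt' {a x a' x' : ℕ} (ha : a' < 2) (hx : x' < n) (h1 : a = a') (h2 : x = x') :
    atv (pt a x : VV n) a' x' := by subst h1; subst h2; exact atv_pt ha hx

def GoodA (bs : Fin 3 → VV n) (p : VV n) (m : ℕ) : Prop :=
  ∃ (i j k : Fin 3) (x aF b c : ℕ), i ≠ j ∧ i ≠ k ∧ j ≠ k ∧ aF < 2 ∧ x < n ∧
    atv (bs i) 0 x ∧ atv (bs j) 1 x ∧ atv (bs k) aF (min (x+1) (n-1)) ∧ atv p b c ∧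
    ((c + 2 ≤ x ∧ 3*n+6+x ≤ m) ∨
     (c + 1 = x ∧ n+2*x+6 ≤ m) ∨
     (c = x ∧ (x = 0 ∨ 2 ≤ m)) ∨
     (c = x+1 ∧ b = aF ∧ (x = 0 ∨ 2 ≤ m)))

def GoodB (bs : Fin 3 → VV n) (p : VV n) (m : ℕ) : Prop :=
  ∃ (i j k : Fin 3) (x aF b c : ℕ), i ≠ j ∧ i ≠ k ∧ j ≠ k ∧ aF < 2 ∧ 1 ≤ x ∧ x < n ∧
    atv (bs i) 0 x ∧ atv (bs j) 1 x ∧ atv (bs k) aF (x-1) ∧ atv p b c ∧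
    ((c = x ∧ (x = n-1 ∨ 2 ≤ m)) ∨
     (b = aF ∧ c+1 = x ∧ (x = n-1 ∨ 2 ≤ m)) ∨
     (b = aF ∧ c = x+1 ∧ c < n ∧ n+2 ≤ m + x))

def GoodI (bs : Fin 3 → VV n) (p : VV n) (m : ℕ) : Prop :=
  ∃ (i j k : Fin 3) (a y b c : ℕ), i ≠ j ∧ i ≠ k ∧ j ≠ k ∧ a < 2 ∧ y+1 < n ∧
    atv (bs i) a y ∧ atv (bs j) a (y+1) ∧ atv (bs k) a (y+1) ∧ atv p b c ∧
    n+2*y+7 ≤ m ∧ b < 2 ∧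
    ((b ≠ a ∧ c = y) ∨ (b = a ∧ c = y) ∨ (b ≠ a ∧ (c+1 = y ∨ c = y+1)))

def GoodF (bs : Fin 3 → VV n) (p : VV n) (m : ℕ) : Prop :=
  ∃ (i j k : Fin 3) (bq yq b c : ℕ), i ≠ j ∧ i ≠ k ∧ j ≠ k ∧ bq < 2 ∧ 1 ≤ yq ∧ yq+1 < n ∧
    atv (bs i) (1-bq) yq ∧ atv (bs j) bq (yq-1) ∧ atv (bs k) bq (yq+1) ∧ atv p b c ∧ b < 2 ∧
    ((b = bq ∧ c = yq) ∨ (b ≠ bq ∧ c = yq) ∨ (b = bq ∧ (c+1 = yq ∨ c = yq+1)))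

def Good (bs : Fin 3 → VV n) (p : VV n) (m : ℕ) : Prop :=
  GoodA bs p m ∨ GoodB bs p m ∨ GoodI bs p m ∨ GoodF bs p m

def cov (bs : Fin 3 → VV n) (p : VV n) : Prop := ∀ v, (GG n).Adj p v → ∃ i, bs i = v

def RespAt (bs : Fin 3 → VV n) (p : VV n) (m : ℕ) (bs' : Fin 3 → VV n) : Prop :=
  (∀ i, stepRel (GG n) (bs i) (bs' i)) ∧ (m = 0 → cov bs' p) ∧
  ∀ p', stepRel (GG n) p p' → Good bs' p' (m-1)

lemma stepF (hn : 3 ≤ n) {bs : Fin 3 → VV n} {p m} (h : GoodF bs p m) :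
    ∃ bs', RespAt bs p m bs' := by
  obtain ⟨i,j,k,bq,yq,b,c,hij,hik,hjk,hbq,hyq1,hyq2,hi,hj,hk,hp,hb,hw⟩ := h
  have hc : c < n := hp.2 ▸ p.2.is_lt
  refine ⟨rsp i j k (pt (1-b) c) (pt b (c-1)) (pt b (min (c+1) (n-1))), ?_, ?_, ?_⟩
  · exact rsp_steps hij hik hjk
      (step_to_pt (by omega) (by omega) hi (by omega))
      (step_to_pt (by omega) (by omega) hj (by omega))
      (step_to_pt (by omega) (by omega) hk (by omega))
  · intro _ v hv
    rw [adj_iff] at hv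
    obtain ⟨hpb, hpc⟩ := hp
    have hv1 := v.1.is_lt
    have hv2 := v.2.is_lt
    rcases hv with ⟨h1, h2⟩ | ⟨h1, h2 | h2⟩
    · refine ⟨i, ?_⟩; rw [rsp_i]
      exact eq_of_vals (by rw [pt_fst (by omega)]; omega) (by rw [pt_snd _ (by omega)]; omega)
    · refine ⟨k, ?_⟩; rw [rsp_k hik hjk]
      exact eq_of_vals (by rw [pt_fst (by omega)]; omega) (by rw [pt_snd _ (by omega)]; omega)
    · refine ⟨j, ?_⟩; rw [rsp_j hij]
      exact eq_of_vals (by rw [pt_fst (by omega)]; omega) (by rw [pt_snd _ (by omega)]; omega)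
  · intro p' hstep
    obtain ⟨b', c', hp', hb', hc', hmov⟩ := step_cases hstep hp
    by_cases hcl : 1 ≤ c ∧ c + 1 < n
    · -- interior: GoodF at q' = (b,c)
      refine Or.inr (Or.inr (Or.inr ⟨i, j, k, b, c, b', c', hij, hik, hjk, by omega, by omega,
        by omega, ?_, ?_, ?_, hp', hb', by omega⟩))
      · rw [rsp_i]; exact atv_pt' (by omega) (by omega) rfl rfl
      · rw [rsp_j hij]; exact atv_pt' (by omega) (by omega) rfl rfl
      · rw [rsp_k hik hjk]; exact atv_pt' (by omega) (by omega) rfl (by omega)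
    · by_cases hc0 : c = 0
      · -- left wall: GoodA x'=0, aF'=b, pair indices depend on b
        by_cases hb0 : b = 0
        · refine Or.inl ⟨j, i, k, 0, b, b', c', Ne.symm hij, hjk, hik, by omega, by omega,
            ?_, ?_, ?_, hp', ?_⟩
          · rw [rsp_j hij]; exact atv_pt' (by omega) (by omega) (by omega) (by omega)
          · rw [rsp_i]; exact atv_pt' (by omega) (by omega) (by omega) (by omega)
          · rw [rsp_k hik hjk]; exact atv_pt' (by omega) (by omega) (by omega) (by omega)
          · omega
        · refine Or.inl ⟨i, j, k, 0, b, b', c', hij, hik, hjk, by omega, by omega,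
            ?_, ?_, ?_, hp', ?_⟩
          · rw [rsp_i]; exact atv_pt' (by omega) (by omega) (by omega) (by omega)
          · rw [rsp_j hij]; exact atv_pt' (by omega) (by omega) (by omega) (by omega)
          · rw [rsp_k hik hjk]; exact atv_pt' (by omega) (by omega) (by omega) (by omega)
          · omega
      · -- right wall: c = n-1: GoodB x'=n-1, aF'=b; pair = {i,k}, foot = j
        have hcn : c = n-1 := by omega
        by_cases hb0 : b = 0
        · refine Or.inr (Or.inl ⟨k, i, j, n-1, b, b', c', Ne.symm hik, Ne.symm hjk, hij,
            by omega, by omega, by omega, ?_, ?_, ?_, hp', ?_⟩)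
          · rw [rsp_k hik hjk]; exact atv_pt' (by omega) (by omega) (by omega) (by omega)
          · rw [rsp_i]; exact atv_pt' (by omega) (by omega) (by omega) (by omega)
          · rw [rsp_j hij]; exact atv_pt' (by omega) (by omega) (by omega) (by omega)
          · omega
        · refine Or.inr (Or.inl ⟨i, k, j, n-1, b, b', c', hik, hij, Ne.symm hjk,
            by omega, by omega, by omega, ?_, ?_, ?_, hp', ?_⟩)
          · rw [rsp_i]; exact atv_pt' (by omega) (by omega) (by omega) (by omega)
          · rw [rsp_k hik hjk]; exact atv_pt' (by omega) (by omega) (by omega) (by omega)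
          · rw [rsp_j hij]; exact atv_pt' (by omega) (by omega) (by omega) (by omega)
          · omega

lemma stepI (hn : 3 ≤ n) {bs : Fin 3 → VV n} {p m} (h : GoodI bs p m) :
    ∃ bs', RespAt bs p m bs' := by
  obtain ⟨i,j,k,a,y,b,c,hij,hik,hjk,ha,hy,hi,hj,hk,hp,hm,hb,hw⟩ := h
  have hc : c < n := hp.2 ▸ p.2.is_lt
  by_cases h1 : c = y ∧ b ≠ a
  · -- president at q: form T(q): result GoodA(y, 1-a)
    refine ⟨rsp i j k (pt (1-a) y) (pt a y) (pt (1-a) (y+1)), ?_, ?_, ?_⟩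
    · exact rsp_steps hij hik hjk
        (step_to_pt (by omega) (by omega) hi (by omega))
        (step_to_pt (by omega) (by omega) hj (by omega))
        (step_to_pt (by omega) (by omega) hk (by omega))
    · intro hm0; exact absurd (hm0 ▸ hm) (by omega)
    · intro p' hstep
      obtain ⟨b',c',hp',hb',hc',hmov⟩ := step_cases hstep hp
      by_cases ha0 : a = 0
      · refine Or.inl ⟨j, i, k, y, 1-a, b', c', Ne.symm hij, hjk, hik, by omega, by omega,
          ?_, ?_, ?_, hp', by omega⟩
        · rw [rsp_j hij]; exact atv_pt' (by omega) (by omega) (by omega) rfl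
        · rw [rsp_i]; exact atv_pt' (by omega) (by omega) (by omega) rfl
        · rw [rsp_k hik hjk]; exact atv_pt' (by omega) (by omega) (by omega) (by omega)
      · refine Or.inl ⟨i, j, k, y, 1-a, b', c', hij, hik, hjk, by omega, by omega,
          ?_, ?_, ?_, hp', by omega⟩
        · rw [rsp_i]; exact atv_pt' (by omega) (by omega) (by omega) rfl
        · rw [rsp_j hij]; exact atv_pt' (by omega) (by omega) (by omega) rfl
        · rw [rsp_k hik hjk]; exact atv_pt' (by omega) (by omega) (by omega) (by omega)
  by_cases h2 : c = y ∧ b = a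
  · -- president on lead: form T(p): result GoodA(y, a)
    refine ⟨rsp i j k (pt (1-a) y) (pt a y) (pt a (y+1)), ?_, ?_, ?_⟩
    · exact rsp_steps hij hik hjk
        (step_to_pt (by omega) (by omega) hi (by omega))
        (step_to_pt (by omega) (by omega) hj (by omega))
        (step_to_pt (by omega) (by omega) hk (by omega))
    · intro hm0; exact absurd (hm0 ▸ hm) (by omega)
    · intro p' hstep
      obtain ⟨b',c',hp',hb',hc',hmov⟩ := step_cases hstep hp
      by_cases ha0 : a = 0
      · refine Or.inl ⟨j, i, k, y, a, b', c', Ne.symm hij, hjk, hik, by omega, by omega,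
          ?_, ?_, ?_, hp', by omega⟩
        · rw [rsp_j hij]; exact atv_pt' (by omega) (by omega) (by omega) rfl
        · rw [rsp_i]; exact atv_pt' (by omega) (by omega) (by omega) rfl
        · rw [rsp_k hik hjk]; exact atv_pt' (by omega) (by omega) (by omega) (by omega)
      · refine Or.inl ⟨i, j, k, y, a, b', c', hij, hik, hjk, by omega, by omega,
          ?_, ?_, ?_, hp', by omega⟩
        · rw [rsp_i]; exact atv_pt' (by omega) (by omega) (by omega) rfl
        · rw [rsp_j hij]; exact atv_pt' (by omega) (by omega) (by omega) rfl
        · rw [rsp_k hik hjk]; exact atv_pt' (by omega) (by omega) (by omega) (by omega)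
  by_cases h3 : c + 1 = y
  · -- president left: reform I at y-1
    refine ⟨rsp i j k (pt a (y-1)) (pt a y) (pt a y), ?_, ?_, ?_⟩
    · exact rsp_steps hij hik hjk
        (step_to_pt (by omega) (by omega) hi (by omega))
        (step_to_pt (by omega) (by omega) hj (by omega))
        (step_to_pt (by omega) (by omega) hk (by omega))
    · intro hm0; exact absurd (hm0 ▸ hm) (by omega)
    · intro p' hstep
      obtain ⟨b',c',hp',hb',hc',hmov⟩ := step_cases hstep hp
      refine Or.inr (Or.inr (Or.inl ⟨i, j, k, a, y-1, b', c', hij, hik, hjk, by omega, by omega,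
        ?_, ?_, ?_, hp', by omega, by omega, by omega⟩))
      · rw [rsp_i]; exact atv_pt' (by omega) (by omega) rfl rfl
      · rw [rsp_j hij]; exact atv_pt' (by omega) (by omega) rfl (by omega)
      · rw [rsp_k hik hjk]; exact atv_pt' (by omega) (by omega) rfl (by omega)
  · -- president right: form mT: result GoodB(y+1, 1-a)
    have h4 : c = y + 1 ∧ b ≠ a := by
      rcases hw with ⟨w1,w2⟩ | ⟨w1,w2⟩ | ⟨w1, w2 | w2⟩ <;> first | (exact ⟨by omega, w1⟩) | omega
    refine ⟨rsp i j k (pt (1-a) y) (pt (1-a) (y+1)) (pt a (y+1)), ?_, ?_, ?_⟩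
    · exact rsp_steps hij hik hjk
        (step_to_pt (by omega) (by omega) hi (by omega))
        (step_to_pt (by omega) (by omega) hj (by omega))
        (step_to_pt (by omega) (by omega) hk (by omega))
    · intro hm0; exact absurd (hm0 ▸ hm) (by omega)
    · intro p' hstep
      obtain ⟨b',c',hp',hb',hc',hmov⟩ := step_cases hstep hp
      by_cases ha0 : a = 0
      · refine Or.inr (Or.inl ⟨k, j, i, y+1, 1-a, b', c', Ne.symm hjk, Ne.symm hik, Ne.symm hij,
          by omega, by omega, by omega, ?_, ?_, ?_, hp', by omega⟩)
        · rw [rsp_k hik hjk]; exact atv_pt' (by omega) (by omega) (by omega) rfl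
        · rw [rsp_j hij]; exact atv_pt' (by omega) (by omega) (by omega) rfl
        · rw [rsp_i]; exact atv_pt' (by omega) (by omega) (by omega) (by omega)
      · refine Or.inr (Or.inl ⟨j, k, i, y+1, 1-a, b', c', hjk, Ne.symm hij, Ne.symm hik,
          by omega, by omega, by omega, ?_, ?_, ?_, hp', by omega⟩)
        · rw [rsp_j hij]; exact atv_pt' (by omega) (by omega) (by omega) rfl
        · rw [rsp_k hik hjk]; exact atv_pt' (by omega) (by omega) (by omega) rfl
        · rw [rsp_i]; exact atv_pt' (by omega) (by omega) (by omega) (by omega)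
lemma stepB (hn : 3 ≤ n) {bs : Fin 3 → VV n} {p m} (h : GoodB bs p m) :
    ∃ bs', RespAt bs p m bs' := by
  obtain ⟨i,j,k,x,aF,b,c,hij,hik,hjk,haF,hx1,hx,hi,hj,hk,hp,hw⟩ := h
  have hc : c < n := hp.2 ▸ p.2.is_lt
  have hb : b < 2 := hp.1 ▸ p.1.is_lt
  by_cases h1 : c = x
  · -- president on pair: catch → F(p) (or stay GoodB at wall)
    by_cases hb0 : b = 0
    · -- gb = i, go = j
      refine ⟨rsp i j k (pt 0 (min (x+1) (n-1))) (pt 1 x) (pt 0 (x-1)), ?_, ?_, ?_⟩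
      · exact rsp_steps hij hik hjk
          (step_to_pt (by omega) (by omega) hi (by omega))
          (step_to_pt (by omega) (by omega) hj (by omega))
          (step_to_pt (by omega) (by omega) hk (by omega))
      · intro hm0
        have hxw : x = n-1 := by omega
        intro v hv
        rw [adj_iff] at hv
        obtain ⟨hpb, hpc⟩ := hp
        have hv1 := v.1.is_lt; have hv2 := v.2.is_lt
        rcases hv with ⟨w1, w2⟩ | ⟨w1, w2 | w2⟩
        · refine ⟨j, ?_⟩; rw [rsp_j hij]
          exact eq_of_vals (by rw [pt_fst (by omega)]; omega) (by rw [pt_snd _ (by omega)]; omega)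
        · exfalso; omega
        · refine ⟨k, ?_⟩; rw [rsp_k hik hjk]
          exact eq_of_vals (by rw [pt_fst (by omega)]; omega) (by rw [pt_snd _ (by omega)]; omega)
      · intro p' hstep
        obtain ⟨b',c',hp',hb',hc',hmov⟩ := step_cases hstep hp
        by_cases hxn : x = n-1
        · -- GoodB(n-1, 0): pair {j,i}, foot k
          refine Or.inr (Or.inl ⟨i, j, k, n-1, 0, b', c', hij, hik, hjk,
            by omega, by omega, by omega, ?_, ?_, ?_, hp', by omega⟩)
          · rw [rsp_i]; exact atv_pt' (by omega) (by omega) (by omega) (by omega)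
          · rw [rsp_j hij]; exact atv_pt' (by omega) (by omega) (by omega) (by omega)
          · rw [rsp_k hik hjk]; exact atv_pt' (by omega) (by omega) (by omega) (by omega)
        · -- GoodF(q=(0,x)): (go=j, k, gb=i)
          refine Or.inr (Or.inr (Or.inr ⟨j, k, i, 0, x, b', c', hjk, Ne.symm hij, Ne.symm hik,
            by omega, by omega, by omega, ?_, ?_, ?_, hp', hb', by omega⟩))
          · rw [rsp_j hij]; exact atv_pt' (by omega) (by omega) (by omega) rfl
          · rw [rsp_k hik hjk]; exact atv_pt' (by omega) (by omega) (by omega) rfl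
          · rw [rsp_i]; exact atv_pt' (by omega) (by omega) (by omega) (by omega)
    · -- b = 1: gb = j, go = i
      refine ⟨rsp i j k (pt 0 x) (pt 1 (min (x+1) (n-1))) (pt 1 (x-1)), ?_, ?_, ?_⟩
      · exact rsp_steps hij hik hjk
          (step_to_pt (by omega) (by omega) hi (by omega))
          (step_to_pt (by omega) (by omega) hj (by omega))
          (step_to_pt (by omega) (by omega) hk (by omega))
      · intro hm0
        have hxw : x = n-1 := by omega
        intro v hv
        rw [adj_iff] at hv
        obtain ⟨hpb, hpc⟩ := hp
        have hv1 := v.1.is_lt; have hv2 := v.2.is_lt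
        rcases hv with ⟨w1, w2⟩ | ⟨w1, w2 | w2⟩
        · refine ⟨i, ?_⟩; rw [rsp_i]
          exact eq_of_vals (by rw [pt_fst (by omega)]; omega) (by rw [pt_snd _ (by omega)]; omega)
        · exfalso; omega
        · refine ⟨k, ?_⟩; rw [rsp_k hik hjk]
          exact eq_of_vals (by rw [pt_fst (by omega)]; omega) (by rw [pt_snd _ (by omega)]; omega)
      · intro p' hstep
        obtain ⟨b',c',hp',hb',hc',hmov⟩ := step_cases hstep hp
        by_cases hxn : x = n-1
        · refine Or.inr (Or.inl ⟨i, j, k, n-1, 1, b', c', hij, hik, hjk,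
            by omega, by omega, by omega, ?_, ?_, ?_, hp', by omega⟩)
          · rw [rsp_i]; exact atv_pt' (by omega) (by omega) (by omega) (by omega)
          · rw [rsp_j hij]; exact atv_pt' (by omega) (by omega) (by omega) (by omega)
          · rw [rsp_k hik hjk]; exact atv_pt' (by omega) (by omega) (by omega) (by omega)
        · -- GoodF(q=(1,x)): (go=i, k, gb=j)
          refine Or.inr (Or.inr (Or.inr ⟨i, k, j, 1, x, b', c', hik, hij, Ne.symm hjk,
            by omega, by omega, by omega, ?_, ?_, ?_, hp', hb', by omega⟩))
          · rw [rsp_i]; exact atv_pt' (by omega) (by omega) (by omega) rfl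
          · rw [rsp_k hik hjk]; exact atv_pt' (by omega) (by omega) (by omega) rfl
          · rw [rsp_j hij]; exact atv_pt' (by omega) (by omega) (by omega) (by omega)
  by_cases h2 : c + 1 = x
  · -- president on foot side (b = aF): catch → F(p) or GoodA(0) at wall
    have hbaF : b = aF := by omega
    by_cases hb0 : b = 0
    · -- gb = i stays, go = j → (1, x-1), k → (0, x-2)
      refine ⟨rsp i j k (pt 0 x) (pt 1 (x-1)) (pt 0 (x-1-1)), ?_, ?_, ?_⟩
      · exact rsp_steps hij hik hjk
          (step_to_pt (by omega) (by omega) hi (by omega))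
          (step_to_pt (by omega) (by omega) hj (by omega))
          (step_to_pt (by omega) (by omega) hk (by omega))
      · intro hm0
        have hxw : x = n-1 := by omega
        intro v hv
        rw [adj_iff] at hv
        obtain ⟨hpb, hpc⟩ := hp
        have hv1 := v.1.is_lt; have hv2 := v.2.is_lt
        rcases hv with ⟨w1, w2⟩ | ⟨w1, w2 | w2⟩
        · refine ⟨j, ?_⟩; rw [rsp_j hij]
          exact eq_of_vals (by rw [pt_fst (by omega)]; omega) (by rw [pt_snd _ (by omega)]; omega)
        · refine ⟨i, ?_⟩; rw [rsp_i]
          exact eq_of_vals (by rw [pt_fst (by omega)]; omega) (by rw [pt_snd _ (by omega)]; omega)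
        · refine ⟨k, ?_⟩; rw [rsp_k hik hjk]
          exact eq_of_vals (by rw [pt_fst (by omega)]; omega) (by rw [pt_snd _ (by omega)]; omega)
      · intro p' hstep
        obtain ⟨b',c',hp',hb',hc',hmov⟩ := step_cases hstep hp
        by_cases hx1' : x = 1
        · -- GoodA(0, 0): pair {j,k} at col 0, foot i at (0,1)
          refine Or.inl ⟨k, j, i, 0, 0, b', c', Ne.symm hjk, Ne.symm hik, Ne.symm hij,
            by omega, by omega, ?_, ?_, ?_, hp', by omega⟩
          · rw [rsp_k hik hjk]; exact atv_pt' (by omega) (by omega) (by omega) (by omega)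
          · rw [rsp_j hij]; exact atv_pt' (by omega) (by omega) (by omega) (by omega)
          · rw [rsp_i]; exact atv_pt' (by omega) (by omega) (by omega) (by omega)
        · -- GoodF(q=(0,x-1)): (j, k, i)
          refine Or.inr (Or.inr (Or.inr ⟨j, k, i, 0, x-1, b', c', hjk, Ne.symm hij, Ne.symm hik,
            by omega, by omega, by omega, ?_, ?_, ?_, hp', hb', by omega⟩))
          · rw [rsp_j hij]; exact atv_pt' (by omega) (by omega) (by omega) (by omega)
          · rw [rsp_k hik hjk]; exact atv_pt' (by omega) (by omega) (by omega) (by omega)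
          · rw [rsp_i]; exact atv_pt' (by omega) (by omega) (by omega) (by omega)
    · -- b = 1: gb = j stays, go = i → (0, x-1), k → (1, x-2)
      refine ⟨rsp i j k (pt 0 (x-1)) (pt 1 x) (pt 1 (x-1-1)), ?_, ?_, ?_⟩
      · exact rsp_steps hij hik hjk
          (step_to_pt (by omega) (by omega) hi (by omega))
          (step_to_pt (by omega) (by omega) hj (by omega))
          (step_to_pt (by omega) (by omega) hk (by omega))
      · intro hm0
        have hxw : x = n-1 := by omega
        intro v hv
        rw [adj_iff] at hv
        obtain ⟨hpb, hpc⟩ := hp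
        have hv1 := v.1.is_lt; have hv2 := v.2.is_lt
        rcases hv with ⟨w1, w2⟩ | ⟨w1, w2 | w2⟩
        · refine ⟨i, ?_⟩; rw [rsp_i]
          exact eq_of_vals (by rw [pt_fst (by omega)]; omega) (by rw [pt_snd _ (by omega)]; omega)
        · refine ⟨j, ?_⟩; rw [rsp_j hij]
          exact eq_of_vals (by rw [pt_fst (by omega)]; omega) (by rw [pt_snd _ (by omega)]; omega)
        · refine ⟨k, ?_⟩; rw [rsp_k hik hjk]
          exact eq_of_vals (by rw [pt_fst (by omega)]; omega) (by rw [pt_snd _ (by omega)]; omega)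
      · intro p' hstep
        obtain ⟨b',c',hp',hb',hc',hmov⟩ := step_cases hstep hp
        by_cases hx1' : x = 1
        · -- GoodA(0, 1): pair {i,k} at col 0, foot j at (1,1)
          refine Or.inl ⟨i, k, j, 0, 1, b', c', hik, hij, Ne.symm hjk,
            by omega, by omega, ?_, ?_, ?_, hp', by omega⟩
          · rw [rsp_i]; exact atv_pt' (by omega) (by omega) (by omega) (by omega)
          · rw [rsp_k hik hjk]; exact atv_pt' (by omega) (by omega) (by omega) (by omega)
          · rw [rsp_j hij]; exact atv_pt' (by omega) (by omega) (by omega) (by omega)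
        · -- GoodF(q=(1,x-1)): (i, k, j)
          refine Or.inr (Or.inr (Or.inr ⟨i, k, j, 1, x-1, b', c', hik, hij, Ne.symm hjk,
            by omega, by omega, by omega, ?_, ?_, ?_, hp', hb', by omega⟩))
          · rw [rsp_i]; exact atv_pt' (by omega) (by omega) (by omega) (by omega)
          · rw [rsp_k hik hjk]; exact atv_pt' (by omega) (by omega) (by omega) (by omega)
          · rw [rsp_j hij]; exact atv_pt' (by omega) (by omega) (by omega) (by omega)
  · -- president to the right (b = aF, c = x+1): shift right
    have h3 : b = aF ∧ c = x+1 ∧ c < n ∧ n+2 ≤ m + x := by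
      rcases hw with ⟨w1,w2⟩ | ⟨w1,w2,w3⟩ | ⟨w1,w2,w3,w4⟩ <;> first | omega | exact ⟨w1, by omega, w3, w4⟩
    refine ⟨rsp i j k (pt 0 (x+1)) (pt 1 (x+1)) (pt aF x), ?_, ?_, ?_⟩
    · exact rsp_steps hij hik hjk
        (step_to_pt (by omega) (by omega) hi (by omega))
        (step_to_pt (by omega) (by omega) hj (by omega))
        (step_to_pt (by omega) (by omega) hk (by omega))
    · intro hm0; exact absurd (hm0 ▸ h3.2.2.2) (by omega)
    · intro p' hstep
      obtain ⟨b',c',hp',hb',hc',hmov⟩ := step_cases hstep hp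
      refine Or.inr (Or.inl ⟨i, j, k, x+1, aF, b', c', hij, hik, hjk,
        by omega, by omega, by omega, ?_, ?_, ?_, hp', by omega⟩)
      · rw [rsp_i]; exact atv_pt' (by omega) (by omega) (by omega) rfl
      · rw [rsp_j hij]; exact atv_pt' (by omega) (by omega) (by omega) rfl
      · rw [rsp_k hik hjk]; exact atv_pt' (by omega) (by omega) (by omega) (by omega)
lemma stepA (hn : 3 ≤ n) {bs : Fin 3 → VV n} {p m} (h : GoodA bs p m) :
    ∃ bs', RespAt bs p m bs' := by
  obtain ⟨i,j,k,x,aF,b,c,hij,hik,hjk,haF,hx,hi,hj,hk,hp,hw⟩ := h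
  have hc : c < n := hp.2 ▸ p.2.is_lt
  have hb : b < 2 := hp.1 ▸ p.1.is_lt
  by_cases h1 : c = x
  · -- catch → F(p) / GoodA(0)-wall / GoodB(n-1)-wall
    by_cases hb0 : b = 0
    · refine ⟨rsp i j k (pt 0 (x-1)) (pt 1 x) (pt 0 (min (x+1) (n-1))), ?_, ?_, ?_⟩
      · exact rsp_steps hij hik hjk
          (step_to_pt (by omega) (by omega) hi (by omega))
          (step_to_pt (by omega) (by omega) hj (by omega))
          (step_to_pt (by omega) (by omega) hk (by omega))
      · intro hm0
        have hx0 : x = 0 := by omega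
        intro v hv
        rw [adj_iff] at hv
        obtain ⟨hpb, hpc⟩ := hp
        have hv1 := v.1.is_lt; have hv2 := v.2.is_lt
        rcases hv with ⟨w1, w2⟩ | ⟨w1, w2 | w2⟩
        · refine ⟨j, ?_⟩; rw [rsp_j hij]
          exact eq_of_vals (by rw [pt_fst (by omega)]; omega) (by rw [pt_snd _ (by omega)]; omega)
        · refine ⟨k, ?_⟩; rw [rsp_k hik hjk]
          exact eq_of_vals (by rw [pt_fst (by omega)]; omega) (by rw [pt_snd _ (by omega)]; omega)
        · exfalso; omega
      · intro p' hstep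
        obtain ⟨b',c',hp',hb',hc',hmov⟩ := step_cases hstep hp
        by_cases hx0 : x = 0
        · refine Or.inl ⟨i, j, k, 0, 0, b', c', hij, hik, hjk, by omega, by omega,
            ?_, ?_, ?_, hp', by omega⟩
          · rw [rsp_i]; exact atv_pt' (by omega) (by omega) (by omega) (by omega)
          · rw [rsp_j hij]; exact atv_pt' (by omega) (by omega) (by omega) (by omega)
          · rw [rsp_k hik hjk]; exact atv_pt' (by omega) (by omega) (by omega) (by omega)
        by_cases hxn : x = n-1
        · refine Or.inr (Or.inl ⟨k, j, i, n-1, 0, b', c', Ne.symm hjk, Ne.symm hik, Ne.symm hij,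
            by omega, by omega, by omega, ?_, ?_, ?_, hp', by omega⟩)
          · rw [rsp_k hik hjk]; exact atv_pt' (by omega) (by omega) (by omega) (by omega)
          · rw [rsp_j hij]; exact atv_pt' (by omega) (by omega) (by omega) (by omega)
          · rw [rsp_i]; exact atv_pt' (by omega) (by omega) (by omega) (by omega)
        · refine Or.inr (Or.inr (Or.inr ⟨j, i, k, 0, x, b', c', Ne.symm hij, hjk, hik,
            by omega, by omega, by omega, ?_, ?_, ?_, hp', hb', by omega⟩))
          · rw [rsp_j hij]; exact atv_pt' (by omega) (by omega) (by omega) (by omega)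
          · rw [rsp_i]; exact atv_pt' (by omega) (by omega) (by omega) (by omega)
          · rw [rsp_k hik hjk]; exact atv_pt' (by omega) (by omega) (by omega) (by omega)
    · refine ⟨rsp i j k (pt 0 x) (pt 1 (x-1)) (pt 1 (min (x+1) (n-1))), ?_, ?_, ?_⟩
      · exact rsp_steps hij hik hjk
          (step_to_pt (by omega) (by omega) hi (by omega))
          (step_to_pt (by omega) (by omega) hj (by omega))
          (step_to_pt (by omega) (by omega) hk (by omega))
      · intro hm0
        have hx0 : x = 0 := by omega
        intro v hv
        rw [adj_iff] at hv
        obtain ⟨hpb, hpc⟩ := hp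
        have hv1 := v.1.is_lt; have hv2 := v.2.is_lt
        rcases hv with ⟨w1, w2⟩ | ⟨w1, w2 | w2⟩
        · refine ⟨i, ?_⟩; rw [rsp_i]
          exact eq_of_vals (by rw [pt_fst (by omega)]; omega) (by rw [pt_snd _ (by omega)]; omega)
        · refine ⟨k, ?_⟩; rw [rsp_k hik hjk]
          exact eq_of_vals (by rw [pt_fst (by omega)]; omega) (by rw [pt_snd _ (by omega)]; omega)
        · exfalso; omega
      · intro p' hstep
        obtain ⟨b',c',hp',hb',hc',hmov⟩ := step_cases hstep hp
        by_cases hx0 : x = 0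
        · refine Or.inl ⟨i, j, k, 0, 1, b', c', hij, hik, hjk, by omega, by omega,
            ?_, ?_, ?_, hp', by omega⟩
          · rw [rsp_i]; exact atv_pt' (by omega) (by omega) (by omega) (by omega)
          · rw [rsp_j hij]; exact atv_pt' (by omega) (by omega) (by omega) (by omega)
          · rw [rsp_k hik hjk]; exact atv_pt' (by omega) (by omega) (by omega) (by omega)
        by_cases hxn : x = n-1
        · refine Or.inr (Or.inl ⟨i, k, j, n-1, 1, b', c', hik, hij, Ne.symm hjk,
            by omega, by omega, by omega, ?_, ?_, ?_, hp', by omega⟩)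
          · rw [rsp_i]; exact atv_pt' (by omega) (by omega) (by omega) (by omega)
          · rw [rsp_k hik hjk]; exact atv_pt' (by omega) (by omega) (by omega) (by omega)
          · rw [rsp_j hij]; exact atv_pt' (by omega) (by omega) (by omega) (by omega)
        · refine Or.inr (Or.inr (Or.inr ⟨i, j, k, 1, x, b', c', hij, hik, hjk,
            by omega, by omega, by omega, ?_, ?_, ?_, hp', hb', by omega⟩))
          · rw [rsp_i]; exact atv_pt' (by omega) (by omega) (by omega) (by omega)
          · rw [rsp_j hij]; exact atv_pt' (by omega) (by omega) (by omega) (by omega)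
          · rw [rsp_k hik hjk]; exact atv_pt' (by omega) (by omega) (by omega) (by omega)
  by_cases h2 : c = x + 1
  · -- president on foot (b = aF): catch → F(p) / GoodB(n-1)
    have hbaF : b = aF := by omega
    by_cases hb0 : b = 0
    · refine ⟨rsp i j k (pt 0 x) (pt 1 (x+1)) (pt 0 (min (x+2) (n-1))), ?_, ?_, ?_⟩
      · exact rsp_steps hij hik hjk
          (step_to_pt (by omega) (by omega) hi (by omega))
          (step_to_pt (by omega) (by omega) hj (by omega))
          (step_to_pt (by omega) (by omega) hk (by omega))
      · intro hm0
        have hx0 : x = 0 := by omega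
        intro v hv
        rw [adj_iff] at hv
        obtain ⟨hpb, hpc⟩ := hp
        have hv1 := v.1.is_lt; have hv2 := v.2.is_lt
        rcases hv with ⟨w1, w2⟩ | ⟨w1, w2 | w2⟩
        · refine ⟨j, ?_⟩; rw [rsp_j hij]
          exact eq_of_vals (by rw [pt_fst (by omega)]; omega) (by rw [pt_snd _ (by omega)]; omega)
        · refine ⟨k, ?_⟩; rw [rsp_k hik hjk]
          exact eq_of_vals (by rw [pt_fst (by omega)]; omega) (by rw [pt_snd _ (by omega)]; omega)
        · refine ⟨i, ?_⟩; rw [rsp_i]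
          exact eq_of_vals (by rw [pt_fst (by omega)]; omega) (by rw [pt_snd _ (by omega)]; omega)
      · intro p' hstep
        obtain ⟨b',c',hp',hb',hc',hmov⟩ := step_cases hstep hp
        by_cases hxn : x + 1 = n-1
        · refine Or.inr (Or.inl ⟨k, j, i, n-1, 0, b', c', Ne.symm hjk, Ne.symm hik, Ne.symm hij,
            by omega, by omega, by omega, ?_, ?_, ?_, hp', by omega⟩)
          · rw [rsp_k hik hjk]; exact atv_pt' (by omega) (by omega) (by omega) (by omega)
          · rw [rsp_j hij]; exact atv_pt' (by omega) (by omega) (by omega) (by omega)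
          · rw [rsp_i]; exact atv_pt' (by omega) (by omega) (by omega) (by omega)
        · refine Or.inr (Or.inr (Or.inr ⟨j, i, k, 0, x+1, b', c', Ne.symm hij, hjk, hik,
            by omega, by omega, by omega, ?_, ?_, ?_, hp', hb', by omega⟩))
          · rw [rsp_j hij]; exact atv_pt' (by omega) (by omega) (by omega) (by omega)
          · rw [rsp_i]; exact atv_pt' (by omega) (by omega) (by omega) (by omega)
          · rw [rsp_k hik hjk]; exact atv_pt' (by omega) (by omega) (by omega) (by omega)
    · refine ⟨rsp i j k (pt 0 (x+1)) (pt 1 x) (pt 1 (min (x+2) (n-1))), ?_, ?_, ?_⟩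
      · exact rsp_steps hij hik hjk
          (step_to_pt (by omega) (by omega) hi (by omega))
          (step_to_pt (by omega) (by omega) hj (by omega))
          (step_to_pt (by omega) (by omega) hk (by omega))
      · intro hm0
        have hx0 : x = 0 := by omega
        intro v hv
        rw [adj_iff] at hv
        obtain ⟨hpb, hpc⟩ := hp
        have hv1 := v.1.is_lt; have hv2 := v.2.is_lt
        rcases hv with ⟨w1, w2⟩ | ⟨w1, w2 | w2⟩
        · refine ⟨i, ?_⟩; rw [rsp_i]
          exact eq_of_vals (by rw [pt_fst (by omega)]; omega) (by rw [pt_snd _ (by omega)]; omega)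
        · refine ⟨k, ?_⟩; rw [rsp_k hik hjk]
          exact eq_of_vals (by rw [pt_fst (by omega)]; omega) (by rw [pt_snd _ (by omega)]; omega)
        · refine ⟨j, ?_⟩; rw [rsp_j hij]
          exact eq_of_vals (by rw [pt_fst (by omega)]; omega) (by rw [pt_snd _ (by omega)]; omega)
      · intro p' hstep
        obtain ⟨b',c',hp',hb',hc',hmov⟩ := step_cases hstep hp
        by_cases hxn : x + 1 = n-1
        · refine Or.inr (Or.inl ⟨i, k, j, n-1, 1, b', c', hik, hij, Ne.symm hjk,
            by omega, by omega, by omega, ?_, ?_, ?_, hp', by omega⟩)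
          · rw [rsp_i]; exact atv_pt' (by omega) (by omega) (by omega) (by omega)
          · rw [rsp_k hik hjk]; exact atv_pt' (by omega) (by omega) (by omega) (by omega)
          · rw [rsp_j hij]; exact atv_pt' (by omega) (by omega) (by omega) (by omega)
        · refine Or.inr (Or.inr (Or.inr ⟨i, j, k, 1, x+1, b', c', hij, hik, hjk,
            by omega, by omega, by omega, ?_, ?_, ?_, hp', hb', by omega⟩))
          · rw [rsp_i]; exact atv_pt' (by omega) (by omega) (by omega) (by omega)
          · rw [rsp_j hij]; exact atv_pt' (by omega) (by omega) (by omega) (by omega)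
          · rw [rsp_k hik hjk]; exact atv_pt' (by omega) (by omega) (by omega) (by omega)
  by_cases h3 : c + 1 = x ∧ b ≠ aF
  · -- form I
    by_cases hb0 : b = 0
    · -- aF = 1; lead = j
      refine ⟨rsp i j k (pt 1 x) (pt 1 (x-1)) (pt 1 x), ?_, ?_, ?_⟩
      · exact rsp_steps hij hik hjk
          (step_to_pt (by omega) (by omega) hi (by omega))
          (step_to_pt (by omega) (by omega) hj (by omega))
          (step_to_pt (by omega) (by omega) hk (by omega))
      · intro hm0; exfalso; omega
      · intro p' hstep
        obtain ⟨b',c',hp',hb',hc',hmov⟩ := step_cases hstep hp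
        refine Or.inr (Or.inr (Or.inl ⟨j, i, k, 1, x-1, b', c', Ne.symm hij, hjk, hik,
          by omega, by omega, ?_, ?_, ?_, hp', by omega, by omega, by omega⟩))
        · rw [rsp_j hij]; exact atv_pt' (by omega) (by omega) (by omega) (by omega)
        · rw [rsp_i]; exact atv_pt' (by omega) (by omega) (by omega) (by omega)
        · rw [rsp_k hik hjk]; exact atv_pt' (by omega) (by omega) (by omega) (by omega)
    · -- b = 1, aF = 0; lead = i
      refine ⟨rsp i j k (pt 0 (x-1)) (pt 0 x) (pt 0 x), ?_, ?_, ?_⟩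
      · exact rsp_steps hij hik hjk
          (step_to_pt (by omega) (by omega) hi (by omega))
          (step_to_pt (by omega) (by omega) hj (by omega))
          (step_to_pt (by omega) (by omega) hk (by omega))
      · intro hm0; exfalso; omega
      · intro p' hstep
        obtain ⟨b',c',hp',hb',hc',hmov⟩ := step_cases hstep hp
        refine Or.inr (Or.inr (Or.inl ⟨i, j, k, 0, x-1, b', c', hij, hik, hjk,
          by omega, by omega, ?_, ?_, ?_, hp', by omega, by omega, by omega⟩))
        · rw [rsp_i]; exact atv_pt' (by omega) (by omega) (by omega) (by omega)
        · rw [rsp_j hij]; exact atv_pt' (by omega) (by omega) (by omega) (by omega)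
        · rw [rsp_k hik hjk]; exact atv_pt' (by omega) (by omega) (by omega) (by omega)
  · -- shift / advance
    have hlt : c < x := by omega
    refine ⟨rsp i j k (pt 0 (x-1)) (pt 1 (x-1)) (pt aF x), ?_, ?_, ?_⟩
    · exact rsp_steps hij hik hjk
        (step_to_pt (by omega) (by omega) hi (by omega))
        (step_to_pt (by omega) (by omega) hj (by omega))
        (step_to_pt (by omega) (by omega) hk (by omega))
    · intro hm0; exfalso; omega
    · intro p' hstep
      obtain ⟨b',c',hp',hb',hc',hmov⟩ := step_cases hstep hp
      refine Or.inl ⟨i, j, k, x-1, aF, b', c', hij, hik, hjk, by omega, by omega,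
        ?_, ?_, ?_, hp', by omega⟩
      · rw [rsp_i]; exact atv_pt' (by omega) (by omega) (by omega) rfl
      · rw [rsp_j hij]; exact atv_pt' (by omega) (by omega) (by omega) rfl
      · rw [rsp_k hik hjk]; exact atv_pt' (by omega) (by omega) (by omega) (by omega)
theorem step_lemma (hn : 3 ≤ n) {bs : Fin 3 → VV n} {p m} (h : Good bs p m) :
    ∃ bs', RespAt bs p m bs' := by
  rcases h with h | h | h | h
  · exact stepA hn h
  · exact stepB hn h
  · exact stepI hn h
  · exact stepF hn h

lemma good_mono {bs : Fin 3 → VV n} {p m m'} (hm : m ≤ m') (h : Good bs p m) :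
    Good bs p m' := by
  obtain (⟨i,j,k,x,aF,b,c,h1,h2,h3,h4,h5,h6,h7,h8,h9,hw⟩ |
          ⟨i,j,k,x,aF,b,c,h1,h2,h3,h4,h5,h5',h6,h7,h8,h9,hw⟩ |
          ⟨i,j,k,a,y,b,c,h1,h2,h3,h4,h5,h6,h7,h8,h9,hw,hb,hw2⟩ |
          ⟨i,j,k,bq,yq,b,c,h1,h2,h3,h4,h5,h5',h6,h7,h8,h9,hb,hw⟩) := h
  · exact Or.inl ⟨i,j,k,x,aF,b,c,h1,h2,h3,h4,h5,h6,h7,h8,h9, by omega⟩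
  · exact Or.inr (Or.inl ⟨i,j,k,x,aF,b,c,h1,h2,h3,h4,h5,h5',h6,h7,h8,h9, by omega⟩)
  · exact Or.inr (Or.inr (Or.inl ⟨i,j,k,a,y,b,c,h1,h2,h3,h4,h5,h6,h7,h8,h9, by omega, hb, hw2⟩))
  · exact Or.inr (Or.inr (Or.inr ⟨i,j,k,bq,yq,b,c,h1,h2,h3,h4,h5,h5',h6,h7,h8,h9,hb,hw⟩))

noncomputable def bmv (hn : 3 ≤ n) : (Fin 3 → VV n) → VV n → Fin 3 → VV n := fun bs p =>
  if h : ∃ m, Good bs p m then (step_lemma hn (Nat.find_spec h)).choose else bs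

lemma bmv_step (hn : 3 ≤ n) : ∀ (bs : Fin 3 → VV n) p i, stepRel (GG n) (bs i) (bmv hn bs p i) := by
  intro bs p i
  unfold bmv
  split
  · next h => exact (step_lemma hn (Nat.find_spec h)).choose_spec.1 i
  · exact Or.inl rfl

lemma bmv_resp (hn : 3 ≤ n) {bs : Fin 3 → VV n} {p m} (h : Good bs p m) :
    RespAt bs p (Nat.find (⟨m, h⟩ : ∃ m, Good bs p m)) (bmv hn bs p) := by
  unfold bmv
  rw [dif_pos ⟨m, h⟩]
  exact (step_lemma hn (Nat.find_spec (⟨m, h⟩ : ∃ m, Good bs p m))).choose_spec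

theorem win3 (hn : 3 ≤ n) : BodyguardsWin (GG n) 3 := by
  classical
  refine ⟨fun t => if t = 0 then pt 0 (n-1) else if t = 1 then pt 1 (n-1) else pt 0 (n-1),
    bmv hn, bmv_step hn, ?_⟩
  intro pinit pmove hp
  set binit : Fin 3 → VV n := fun t => if t = 0 then pt 0 (n-1) else if t = 1 then pt 1 (n-1) else pt 0 (n-1) with hbinit
  set play := gamePlay binit (bmv hn) pinit pmove with hplay
  have key : ∀ t, Good (play t).1 (play t).2 (4*n+5 - t) := by
    intro t
    induction t with
    | zero =>
      refine Or.inl ⟨0, 1, 2, n-1, 0, ((play 0).2.1 : ℕ), ((play 0).2.2 : ℕ),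
        by decide, by decide, by decide, by omega, by omega, ?_, ?_, ?_, ⟨rfl, rfl⟩, ?_⟩
      · show atv (binit 0) 0 (n-1); simp [hbinit]; exact atv_pt (by omega) (by omega)
      · show atv (binit 1) 1 (n-1); simp [hbinit]; exact atv_pt (by omega) (by omega)
      · show atv (binit 2) 0 (min (n-1+1) (n-1))
        have hmin : min (n-1+1) (n-1) = n-1 := by omega
        rw [hmin]
        simp only [hbinit]
        norm_num
        exact atv_pt (by omega) (by omega)
      · have hc := (play 0).2.2.is_lt
        have hb := (play 0).2.1.is_lt
        omega
    | succ t ih =>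
      have hresp := bmv_resp hn ih
      have hfind : Nat.find (⟨_, ih⟩ : ∃ m, Good (play t).1 (play t).2 m) ≤ 4*n+5 - t :=
        Nat.find_le ih
      have hstep : stepRel (GG n) (play t).2 ((play (t+1)).2) := by
        show stepRel (GG n) (play t).2 (pmove (bmv hn (play t).1 (play t).2) (play t).2)
        exact hp _ _
      have hG := hresp.2.2 _ hstep
      have : Good (play (t+1)).1 (play (t+1)).2
          (Nat.find (⟨_, ih⟩ : ∃ m, Good (play t).1 (play t).2 m) - 1) := hG
      exact good_mono (by omega) this
  refine ⟨4*n+5, fun t ht v hv => ?_⟩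
  have hg := key t
  have h0 : Good (play t).1 (play t).2 0 := by
    have : 4*n+5-t = 0 := by omega
    rwa [this] at hg
  have hresp := bmv_resp hn h0
  have hfind : Nat.find (⟨0, h0⟩ : ∃ m, Good (play t).1 (play t).2 m) = 0 := by
    have := Nat.find_le (h := ⟨0, h0⟩) h0; omega
  have hcov := hresp.2.1 hfind
  exact hcov v hv

end BG

namespace BG2
open BG
-- the n = 2 game (two bodyguards on C4)

def Good2 (bs : Fin 2 → VV 2) (p : VV 2) : Prop :=
  ∃ (i j : Fin 2) (bq cq b c : ℕ), i ≠ j ∧ bq < 2 ∧ cq < 2 ∧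
    atv (bs i) (1-bq) cq ∧ atv (bs j) bq (1-cq) ∧ atv p b c ∧ b < 2 ∧ c < 2 ∧
    ((b = bq ∧ c = cq) ∨ (b = 1-bq ∧ c = cq) ∨ (b = bq ∧ c = 1-cq))

lemma two (i j t : Fin 2) (hij : i ≠ j) : t = i ∨ t = j := by
  have := i.is_lt; have := j.is_lt; have := t.is_lt
  simp only [Fin.ext_iff] at *
  omega

def rsp2 (i j : Fin 2) (ti tj : VV 2) : Fin 2 → VV 2 := fun t => if t = i then ti else tj

lemma rsp2_i {i j : Fin 2} {ti tj : VV 2} : rsp2 i j ti tj i = ti := if_pos rfl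

lemma rsp2_j {i j : Fin 2} (hij : i ≠ j) {ti tj : VV 2} : rsp2 i j ti tj j = tj := by
  unfold rsp2; rw [if_neg (Ne.symm hij)]

def Resp2 (bs : Fin 2 → VV 2) (p : VV 2) (bs' : Fin 2 → VV 2) : Prop :=
  (∀ t, stepRel (GG 2) (bs t) (bs' t)) ∧ (∀ v, (GG 2).Adj p v → ∃ i, bs' i = v) ∧
  ∀ p', stepRel (GG 2) p p' → Good2 bs' p'

def InitP (bs : Fin 2 → VV 2) : Prop := atv (bs 0) 0 0 ∧ atv (bs 1) 0 1

lemma resp2_of (bs : Fin 2 → VV 2) (p : VV 2) (i j : Fin 2) (hij : i ≠ j) {b c : ℕ}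
    (hp : atv p b c) (hb : b < 2) (hc : c < 2)
    (hsi : stepRel (GG 2) (bs i) (pt (1-b) c)) (hsj : stepRel (GG 2) (bs j) (pt b (1-c))) :
    ∃ bs', Resp2 bs p bs' := by
  refine ⟨rsp2 i j (pt (1-b) c) (pt b (1-c)), ?_, ?_, ?_⟩
  · intro t
    rcases two i j t hij with rfl | rfl
    · rwa [rsp2_i]
    · rwa [rsp2_j hij]
  · intro v hv
    rw [adj_iff] at hv
    obtain ⟨hpb, hpc⟩ := hp
    have hv1 := v.1.is_lt; have hv2 := v.2.is_lt
    rcases hv with ⟨w1, w2⟩ | ⟨w1, w2⟩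
    · refine ⟨i, ?_⟩; rw [rsp2_i]
      exact eq_of_vals (by rw [pt_fst (by omega)]; omega) (by rw [pt_snd _ (by omega)]; omega)
    · refine ⟨j, ?_⟩; rw [rsp2_j hij]
      exact eq_of_vals (by rw [pt_fst (by omega)]; omega) (by rw [pt_snd _ (by omega)]; omega)
  · intro p' hstep
    obtain ⟨b',c',hp',hb',hc',hmov⟩ := step_cases hstep hp
    refine ⟨i, j, b, c, b', c', hij, hb, hc, ?_, ?_, hp', hb', hc', by omega⟩
    · rw [rsp2_i]; exact atv_pt' (by omega) (by omega) rfl rfl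
    · rw [rsp2_j hij]; exact atv_pt' (by omega) (by omega) rfl rfl

lemma exists2 {bs : Fin 2 → VV 2} {p : VV 2} (h : Good2 bs p ∨ InitP bs) :
    ∃ bs', Resp2 bs p bs' := by
  have hb : (p.1:ℕ) < 2 := p.1.is_lt
  have hc : (p.2:ℕ) < 2 := p.2.is_lt
  rcases h with ⟨i,j,bq,cq,b,c,hij,hbq,hcq,hi,hj,hp,hb2,hc2,hw⟩ | ⟨h0, h1⟩
  · exact resp2_of bs p i j hij hp hb2 hc2
      (step_to_pt (by omega) (by omega) hi (by omega))
      (step_to_pt (by omega) (by omega) hj (by omega))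
  · by_cases hcz : (p.2:ℕ) = 0
    · exact resp2_of bs p 0 1 (by decide) ⟨rfl, rfl⟩ hb hc
        (step_to_pt (by omega) (by omega) h0 (by omega))
        (step_to_pt (by omega) (by omega) h1 (by omega))
    · exact resp2_of bs p 1 0 (by decide) ⟨rfl, rfl⟩ hb hc
        (step_to_pt (by omega) (by omega) h1 (by omega))
        (step_to_pt (by omega) (by omega) h0 (by omega))

attribute [local instance] Classical.propDecidable

noncomputable def bmv2 : (Fin 2 → VV 2) → VV 2 → Fin 2 → VV 2 := fun bs p =>
  if h : ∃ bs', Resp2 bs p bs' then h.choose else bs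

lemma bmv2_step : ∀ (bs : Fin 2 → VV 2) p i, stepRel (GG 2) (bs i) (bmv2 bs p i) := by
  intro bs p i
  unfold bmv2
  split
  · next h => exact h.choose_spec.1 i
  · exact Or.inl rfl

lemma bmv2_resp {bs : Fin 2 → VV 2} {p : VV 2} (h : Good2 bs p ∨ InitP bs) :
    Resp2 bs p (bmv2 bs p) := by
  unfold bmv2
  rw [dif_pos (exists2 h)]
  exact (exists2 h).choose_spec

theorem win2 : BodyguardsWin (GG 2) 2 := by
  classical
  refine ⟨fun t => if t = 0 then pt 0 0 else pt 0 1, bmv2, bmv2_step, ?_⟩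
  intro pinit pmove hp
  set binit : Fin 2 → VV 2 := fun t => if t = 0 then pt 0 0 else pt 0 1 with hbinit
  set play := gamePlay binit bmv2 pinit pmove with hplay
  have key : ∀ t, Good2 (play t).1 (play t).2 ∨ InitP (play t).1 := by
    intro t
    induction t with
    | zero =>
      refine Or.inr ⟨?_, ?_⟩
      · show atv (binit 0) 0 0; simp [hbinit]; exact atv_pt (by omega) (by omega)
      · show atv (binit 1) 0 1; simp [hbinit]; exact atv_pt (by omega) (by omega)
    | succ t ih =>
      have hresp := bmv2_resp ih
      have hstep : stepRel (GG 2) (play t).2 ((play (t+1)).2) := by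
        show stepRel (GG 2) (play t).2 (pmove (bmv2 (play t).1 (play t).2) (play t).2)
        exact hp _ _
      exact Or.inl (hresp.2.2 _ hstep)
  refine ⟨0, fun t _ v hv => ?_⟩
  exact (bmv2_resp (key t)).2.1 v hv

end BG2

section Assembly
open BG

lemma lower_bound {V : Type*} (G : SimpleGraph V) {k d : ℕ} (h : BodyguardsWin G k)
    (v0 : V) (w : Fin d → V) (hinj : Function.Injective w) (hadj : ∀ t, G.Adj v0 (w t)) :
    d ≤ k := by
  obtain ⟨binit, bmove, hleg, hwin⟩ := h
  obtain ⟨N, hN⟩ := hwin (fun _ => v0) (fun _ p => p) (fun _ _ => Or.inl rfl)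
  have hfix : ∀ t, (gamePlay binit bmove (fun _ => v0) (fun _ p => p) t).2 = v0 := by
    intro t
    induction t with
    | zero => rfl
    | succ t ih => exact ih
  have hNt := hN N le_rfl
  rw [hfix N] at hNt
  have hf : ∀ t : Fin d, ∃ i : Fin k,
      (gamePlay binit bmove (fun _ => v0) (fun _ p => p) (N+1)).1 i = w t :=
    fun t => hNt (w t) (hadj t)
  choose f hfspec using hf
  have hfinj : Function.Injective f := by
    intro s t hst
    apply hinj
    rw [← hfspec s, ← hfspec t, hst]
  calc d = Fintype.card (Fin d) := by simp
  _ ≤ Fintype.card (Fin k) := Fintype.card_le_of_injective f hfinj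
  _ = k := by simp

lemma lb3 {n : ℕ} (hn : 3 ≤ n) [NeZero n] {k : ℕ} (h : BodyguardsWin (GG n) k) : 3 ≤ k := by
  have c01 : (1:ℕ) < n := by omega
  have c02 : (2:ℕ) < n := by omega
  have c00 : (0:ℕ) < n := by omega
  refine lower_bound (GG n) h (pt 0 1) ![pt 1 1, pt 0 0, pt 0 2] ?_ ?_
  · have key : ∀ u : Fin 3, atv ((![pt 1 1, pt 0 0, pt 0 2] : Fin 3 → VV n) u)
        (if u = 0 then 1 else 0) (if u = 0 then 1 else if u = 1 then 0 else 2) := by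
      intro u
      rcases tri 0 1 2 u (by decide) (by decide) (by decide) with rfl | rfl | rfl
      · simpa using atv_pt (n := n) (by omega) c01
      · simpa using atv_pt (n := n) (by omega) c00
      · simpa using atv_pt (n := n) (by omega) c02
    intro s t hst
    have k1 := key s; have k2 := key t
    rw [hst] at k1
    obtain ⟨a1, x1⟩ := k1; obtain ⟨a2, x2⟩ := k2
    rcases tri 0 1 2 s (by decide) (by decide) (by decide) with rfl | rfl | rfl <;>
      rcases tri 0 1 2 t (by decide) (by decide) (by decide) with rfl | rfl | rfl <;>
      simp_all
  · intro t
    have h01 : atv (pt 0 1 : VV n) 0 1 := atv_pt (by omega) c01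
    rcases tri 0 1 2 t (by decide) (by decide) (by decide) with rfl | rfl | rfl
    · show (GG n).Adj (pt 0 1) (pt 1 1)
      have h2 : atv (pt 1 1 : VV n) 1 1 := atv_pt (by omega) c01
      rw [adj_iff, h01.1, h01.2, h2.1, h2.2]; omega
    · show (GG n).Adj (pt 0 1) (pt 0 0)
      have h2 : atv (pt 0 0 : VV n) 0 0 := atv_pt (by omega) c00
      rw [adj_iff, h01.1, h01.2, h2.1, h2.2]; omega
    · show (GG n).Adj (pt 0 1) (pt 0 2)
      have h2 : atv (pt 0 2 : VV n) 0 2 := atv_pt (by omega) c02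
      rw [adj_iff, h01.1, h01.2, h2.1, h2.2]; omega

lemma lb2 {k : ℕ} (h : BodyguardsWin (GG 2) k) : 2 ≤ k := by
  refine lower_bound (GG 2) h (pt 0 0) ![pt 1 0, pt 0 1] ?_ ?_
  · have key : ∀ u : Fin 2, atv ((![pt 1 0, pt 0 1] : Fin 2 → VV 2) u)
        (if u = 0 then 1 else 0) (if u = 0 then 0 else 1) := by
      intro u
      rcases BG2.two 0 1 u (by decide) with rfl | rfl
      · simpa using atv_pt (n := 2) (by omega) (by omega)
      · simpa using atv_pt (n := 2) (by omega) (by omega)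
    intro s t hst
    have k1 := key s; have k2 := key t
    rw [hst] at k1
    obtain ⟨a1, x1⟩ := k1; obtain ⟨a2, x2⟩ := k2
    rcases BG2.two 0 1 s (by decide) with rfl | rfl <;>
      rcases BG2.two 0 1 t (by decide) with rfl | rfl <;>
      simp_all
  · intro t
    have h00 : atv (pt 0 0 : VV 2) 0 0 := atv_pt (by omega) (by omega)
    rcases BG2.two 0 1 t (by decide) with rfl | rfl
    · show (GG 2).Adj (pt 0 0) (pt 1 0)
      have h2 : atv (pt 1 0 : VV 2) 1 0 := atv_pt (by omega) (by omega)
      rw [adj_iff, h00.1, h00.2, h2.1, h2.2]; omega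
    · show (GG 2).Adj (pt 0 0) (pt 0 1)
      have h2 : atv (pt 0 1 : VV 2) 0 1 := atv_pt (by omega) (by omega)
      rw [adj_iff, h00.1, h00.2, h2.1, h2.2]; omega

end Assembly

/-- For `n ≥ 2`, `B(P_2 □ P_n) = 2` if `n = 2` and `B(P_2 □ P_n) = 3` if `n ≥ 3`. -/
theorem bodyguardNumber_pathGraph_two_boxProd (n : ℕ) (hn : 2 ≤ n) :
    bodyguardNumber (SimpleGraph.pathGraph 2 □ SimpleGraph.pathGraph n) =
      if n = 2 then 2 else 3 := by
  by_cases h2 : n = 2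
  · subst h2
    simp only [if_pos rfl]
    unfold bodyguardNumber
    apply le_antisymm
    · exact Nat.sInf_le BG2.win2
    · exact le_csInf ⟨2, BG2.win2⟩ (fun k hk => lb2 hk)
  · have hn3 : 3 ≤ n := by omega
    haveI : NeZero n := ⟨by omega⟩
    simp only [if_neg h2]
    unfold bodyguardNumber
    apply le_antisymm
    · exact Nat.sInf_le (BG.win3 hn3)
    · exact le_csInf ⟨3, BG.win3 hn3⟩ (fun k hk => lb3 hn3 hk)
end

section
/- For n ≥ 3, B(P_3 □ P_n) = 4, where P_3 □ P_n is the 3 × n grid graph. -/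
open SimpleGraph

namespace BGproof

abbrev V (n : ℕ) := Fin 3 × Fin n
abbrev GG (n : ℕ) : SimpleGraph (V n) := SimpleGraph.pathGraph 3 □ SimpleGraph.pathGraph n

variable {n : ℕ}

theorem adj_iff {x y : V n} :
    (GG n).Adj x y ↔
      ((x.1.1 + 1 = y.1.1 ∨ y.1.1 + 1 = x.1.1) ∧ x.2.1 = y.2.1) ∨
      (x.1.1 = y.1.1 ∧ (x.2.1 + 1 = y.2.1 ∨ y.2.1 + 1 = x.2.1)) := by
  simp only [GG, boxProd_adj, pathGraph_adj, Fin.ext_iff]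
  tauto

theorem stepRel_iff {x y : V n} :
    stepRel (GG n) x y ↔
      (x.1.1 = y.1.1 ∧ x.2.1 = y.2.1) ∨
      (x.1.1 = y.1.1 ∧ (x.2.1 + 1 = y.2.1 ∨ y.2.1 + 1 = x.2.1)) ∨
      ((x.1.1 + 1 = y.1.1 ∨ y.1.1 + 1 = x.1.1) ∧ x.2.1 = y.2.1) := by
  rw [stepRel, adj_iff, Prod.ext_iff]
  simp only [Fin.ext_iff]
  tauto

theorem veq_iff {x y : V n} : x = y ↔ (x.1.1 = y.1.1 ∧ x.2.1 = y.2.1) := by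
  simp [Prod.ext_iff, Fin.ext_iff]

/-- the four "role" positions around the president -/
def pU (p : V n) : V n := (⟨1 - min p.1.1 1, by omega⟩, p.2)
def pD (p : V n) : V n := (⟨min (3 - p.1.1) 2, by omega⟩, p.2)
def pL (p : V n) : V n := (p.1, ⟨p.2.1 - 1, by have := p.2.isLt; omega⟩)
def pR (hn : 3 ≤ n) (p : V n) : V n := (p.1, ⟨min (p.2.1 + 1) (n - 1), by omega⟩)

def roleVec (hn : 3 ≤ n) (p : V n) : Fin 4 → V n := ![pU p, pD p, pL p, pR hn p]

/-- roles always cover the open neighbourhood -/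
theorem role_cover (hn : 3 ≤ n) {p v : V n} (h : (GG n).Adj p v) :
    ∃ i, roleVec hn p i = v := by
  rw [adj_iff] at h
  have h3 := p.1.isLt; have h3' := v.1.isLt
  have hcn := p.2.isLt; have hcn' := v.2.isLt
  have key : roleVec hn p 0 = v ∨ roleVec hn p 1 = v ∨ roleVec hn p 2 = v ∨ roleVec hn p 3 = v := by
    simp only [roleVec, pU, pD, pL, pR, veq_iff, Matrix.cons_val_zero, Matrix.cons_val_one,
      Matrix.head_cons, Matrix.cons_val_two, Matrix.tail_cons, Matrix.cons_val_three]
    omega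
  rcases key with h | h | h | h
  exacts [⟨0, h⟩, ⟨1, h⟩, ⟨2, h⟩, ⟨3, h⟩]

/-- roles move by at most one step when the president moves by at most one step -/
theorem role_step (hn : 3 ≤ n) {p q : V n} (h : stepRel (GG n) p q) (i : Fin 4) :
    stepRel (GG n) (roleVec hn p i) (roleVec hn q i) := by
  rw [stepRel_iff] at h
  have h3 := p.1.isLt; have h3' := q.1.isLt
  have hcn := p.2.isLt; have hcn' := q.2.isLt
  fin_cases i <;> (rw [stepRel_iff]; simp [roleVec, pU, pD, pL, pR]; omega)

/-- whether the guards can jump onto the role positions around `p` -/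
def CanPounce (hn : 3 ≤ n) (bs : Fin 4 → V n) (p : V n) : Prop :=
  ∃ f : Fin 4 → Fin 4, Function.Surjective f ∧
    ∀ i, stepRel (GG n) (bs i) (roleVec hn p (f i))

/-- wall at column j with nose at (1,j+1) -/
def Tc (j : ℕ) (h : j + 1 < n) : Fin 4 → V n :=
  ![(⟨0, by omega⟩, ⟨j, by omega⟩), (⟨1, by omega⟩, ⟨j, by omega⟩),
    (⟨2, by omega⟩, ⟨j, by omega⟩), (⟨1, by omega⟩, ⟨j + 1, h⟩)]

/-- corner-chasing configuration for row 0 -/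
def C1c (j : ℕ) (h : j + 1 < n) : Fin 4 → V n :=
  ![(⟨0, by omega⟩, ⟨j, by omega⟩), (⟨1, by omega⟩, ⟨j + 1, h⟩),
    (⟨2, by omega⟩, ⟨j + 1, h⟩), (⟨0, by omega⟩, ⟨j + 1, h⟩)]

/-- corner-chasing configuration for row 2 -/
def C2c (j : ℕ) (h : j + 1 < n) : Fin 4 → V n :=
  ![(⟨0, by omega⟩, ⟨j + 1, h⟩), (⟨1, by omega⟩, ⟨j + 1, h⟩),
    (⟨2, by omega⟩, ⟨j, by omega⟩), (⟨2, by omega⟩, ⟨j + 1, h⟩)]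

section PounceLemmas
variable (hn : 3 ≤ n) {j : ℕ} (hj : j + 1 < n) {p : V n}

theorem pounce_T (hp : p.2.1 = j ∨ (p.1.1 = 1 ∧ p.2.1 = j + 1)) :
    CanPounce hn (Tc j hj) p := by
  have h3 := p.1.isLt; have hcn := p.2.isLt
  rcases hp with hp | hp
  · rcases (by omega : p.1.1 = 0 ∨ p.1.1 = 1 ∨ p.1.1 = 2) with h0 | h0 | h0
    · exact ⟨![2,0,1,3], by decide, by
        intro i; fin_cases i <;>
          (rw [stepRel_iff]; simp [Tc, roleVec, pU, pD, pL, pR]; omega)⟩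
    · exact ⟨![0,2,1,3], by decide, by
        intro i; fin_cases i <;>
          (rw [stepRel_iff]; simp [Tc, roleVec, pU, pD, pL, pR]; omega)⟩
    · exact ⟨![0,1,2,3], by decide, by
        intro i; fin_cases i <;>
          (rw [stepRel_iff]; simp [Tc, roleVec, pU, pD, pL, pR]; omega)⟩
  · exact ⟨![0,2,1,3], by decide, by
      intro i; fin_cases i <;>
        (rw [stepRel_iff]; simp [Tc, roleVec, pU, pD, pL, pR]; omega)⟩

theorem pounce_C1
    (hp : (p.1.1 = 0 ∧ (p.2.1 = j ∨ p.2.1 = j + 1)) ∨ (p.1.1 = 1 ∧ p.2.1 = j + 1) ∨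
          (p.1.1 = 0 ∧ p.2.1 = j + 2 ∧ j + 3 = n)) :
    CanPounce hn (C1c j hj) p := by
  have h3 := p.1.isLt; have hcn := p.2.isLt
  rcases hp with hp | hp | hp
  · exact ⟨![2,0,1,3], by decide, by
      intro i; fin_cases i <;>
        (rw [stepRel_iff]; simp [C1c, roleVec, pU, pD, pL, pR]; omega)⟩
  · exact ⟨![2,3,1,0], by decide, by
      intro i; fin_cases i <;>
        (rw [stepRel_iff]; simp [C1c, roleVec, pU, pD, pL, pR]; omega)⟩
  · exact ⟨![2,0,1,3], by decide, by
      intro i; fin_cases i <;>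
        (rw [stepRel_iff]; simp [C1c, roleVec, pU, pD, pL, pR]; omega)⟩

theorem pounce_C2
    (hp : (p.1.1 = 2 ∧ (p.2.1 = j ∨ p.2.1 = j + 1)) ∨ (p.1.1 = 1 ∧ p.2.1 = j + 1) ∨
          (p.1.1 = 2 ∧ p.2.1 = j + 2 ∧ j + 3 = n)) :
    CanPounce hn (C2c j hj) p := by
  have h3 := p.1.isLt; have hcn := p.2.isLt
  rcases hp with hp | hp | hp
  · exact ⟨![0,1,2,3], by decide, by
      intro i; fin_cases i <;>
        (rw [stepRel_iff]; simp [C2c, roleVec, pU, pD, pL, pR]; omega)⟩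
  · exact ⟨![0,3,2,1], by decide, by
      intro i; fin_cases i <;>
        (rw [stepRel_iff]; simp [C2c, roleVec, pU, pD, pL, pR]; omega)⟩
  · exact ⟨![0,1,2,3], by decide, by
      intro i; fin_cases i <;>
        (rw [stepRel_iff]; simp [C2c, roleVec, pU, pD, pL, pR]; omega)⟩

end PounceLemmas

def IsT (bs : Fin 4 → V n) : Prop := ∃ j, ∃ hj : j + 1 < n, bs = Tc j hj
def IsC1 (bs : Fin 4 → V n) : Prop := ∃ j, ∃ hj : j + 1 < n, bs = C1c j hj
def IsC2 (bs : Fin 4 → V n) : Prop := ∃ j, ∃ hj : j + 1 < n, bs = C2c j hj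

theorem T_inj {j j' : ℕ} {hj : j + 1 < n} {hj' : j' + 1 < n}
    (h : (Tc j hj : Fin 4 → V n) = Tc j' hj') : j = j' := by
  have := congrFun h 0
  simpa [Tc, Prod.ext_iff, Fin.ext_iff] using this

theorem C1_inj {j j' : ℕ} {hj : j + 1 < n} {hj' : j' + 1 < n}
    (h : (C1c j hj : Fin 4 → V n) = C1c j' hj') : j = j' := by
  have := congrFun h 0
  simpa [C1c, Prod.ext_iff, Fin.ext_iff] using this

theorem C2_inj {j j' : ℕ} {hj : j + 1 < n} {hj' : j' + 1 < n}
    (h : (C2c j hj : Fin 4 → V n) = C2c j' hj') : j = j' := by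
  have := congrFun h 2
  simpa [C2c, Prod.ext_iff, Fin.ext_iff] using this

theorem C1_not_T {j : ℕ} {hj : j + 1 < n} : ¬ IsT (C1c j hj : Fin 4 → V n) := by
  rintro ⟨j', hj', heq⟩
  have h0 := congrFun heq 0
  have h1 := congrFun heq 1
  simp [C1c, Tc, Prod.ext_iff, Fin.ext_iff] at h0 h1
  omega

theorem C2_not_T {j : ℕ} {hj : j + 1 < n} : ¬ IsT (C2c j hj : Fin 4 → V n) := by
  rintro ⟨j', hj', heq⟩
  have h0 := congrFun heq 0
  have h2 := congrFun heq 2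
  simp [C2c, Tc, Prod.ext_iff, Fin.ext_iff] at h0 h2
  omega

theorem C2_not_C1 {j : ℕ} {hj : j + 1 < n} : ¬ IsC1 (C2c j hj : Fin 4 → V n) := by
  rintro ⟨j', hj', heq⟩
  have h3 := congrFun heq 3
  simp [C2c, C1c, Prod.ext_iff, Fin.ext_iff] at h3

open scoped Classical in
noncomputable def tnext (hn : 3 ≤ n) (p : V n) (j : ℕ) (hj : j + 1 < n) : Fin 4 → V n :=
  if p.1.1 = 0 ∧ p.2.1 = j + 1 then C1c j hj
  else if p.1.1 = 2 ∧ p.2.1 = j + 1 then C2c j hj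
  else if h2 : j + 2 < n then Tc (j + 1) h2 else Tc j hj

noncomputable def c1next (j : ℕ) (hj : j + 1 < n) : Fin 4 → V n :=
  if h2 : j + 2 < n then C1c (j + 1) h2 else C1c j hj

noncomputable def c2next (j : ℕ) (hj : j + 1 < n) : Fin 4 → V n :=
  if h2 : j + 2 < n then C2c (j + 1) h2 else C2c j hj

open scoped Classical in
noncomputable def bmove (hn : 3 ≤ n) (bs : Fin 4 → V n) (p : V n) : Fin 4 → V n :=
  if h : CanPounce hn bs p then roleVec hn p ∘ h.choose
  else if hT : IsT bs then tnext hn p hT.choose hT.choose_spec.choose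
  else if hC : IsC1 bs then c1next hC.choose hC.choose_spec.choose
  else if hC2 : IsC2 bs then c2next hC2.choose hC2.choose_spec.choose
  else bs

theorem tnext_congr (hn : 3 ≤ n) (p : V n) {j j' : ℕ} {hj : j + 1 < n} {hj' : j' + 1 < n}
    (h : j = j') : tnext hn p j hj = tnext hn p j' hj' := by subst h; rfl

theorem c1next_congr {j j' : ℕ} {hj : j + 1 < n} {hj' : j' + 1 < n}
    (h : j = j') : c1next j hj = c1next j' hj' := by subst h; rfl

theorem c2next_congr {j j' : ℕ} {hj : j + 1 < n} {hj' : j' + 1 < n}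
    (h : j = j') : c2next j hj = c2next j' hj' := by subst h; rfl

theorem tnext_legal (hn : 3 ≤ n) (p : V n) (j : ℕ) (hj : j + 1 < n) (i : Fin 4) :
    stepRel (GG n) (Tc j hj i) (tnext hn p j hj i) := by
  unfold tnext
  split_ifs with h1 h2 h3 <;> fin_cases i <;>
    ((rw [stepRel_iff]; simp [Tc, C1c, C2c]) <;> omega)

theorem c1next_legal (j : ℕ) (hj : j + 1 < n) (i : Fin 4) :
    stepRel (GG n) (C1c j hj i) (c1next j hj i) := by
  unfold c1next
  split_ifs with h1 <;> fin_cases i <;>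
    ((rw [stepRel_iff]; simp [C1c]) <;> omega)

theorem c2next_legal (j : ℕ) (hj : j + 1 < n) (i : Fin 4) :
    stepRel (GG n) (C2c j hj i) (c2next j hj i) := by
  unfold c2next
  split_ifs with h1 <;> fin_cases i <;>
    ((rw [stepRel_iff]; simp [C2c]) <;> omega)

theorem bmove_legal (hn : 3 ≤ n) : ∀ bs p i, stepRel (GG n) (bs i) (bmove hn bs p i) := by
  intro bs p i
  unfold bmove
  split_ifs with h hT hC hC2
  · exact h.choose_spec.2 i
  · obtain ⟨hj, hbs⟩ := hT.choose_spec
    conv_lhs => rw [hbs]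
    exact tnext_legal hn p _ _ i
  · obtain ⟨hj, hbs⟩ := hC.choose_spec
    conv_lhs => rw [hbs]
    exact c1next_legal _ _ i
  · obtain ⟨hj, hbs⟩ := hC2.choose_spec
    conv_lhs => rw [hbs]
    exact c2next_legal _ _ i
  · exact Or.inl rfl

theorem bmove_eq_pounce (hn : 3 ≤ n) {bs : Fin 4 → V n} {p : V n} (h : CanPounce hn bs p) :
    ∃ f, Function.Surjective f ∧ bmove hn bs p = roleVec hn p ∘ f := by
  refine ⟨h.choose, h.choose_spec.1, ?_⟩
  unfold bmove; rw [dif_pos h]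

theorem bmove_T (hn : 3 ≤ n) {p : V n} {j : ℕ} {hj : j + 1 < n}
    (hnp : ¬ CanPounce hn (Tc j hj) p) :
    bmove hn (Tc j hj) p = tnext hn p j hj := by
  have hT : IsT (Tc j hj : Fin 4 → V n) := ⟨j, hj, rfl⟩
  unfold bmove
  rw [dif_neg hnp, dif_pos hT]
  exact tnext_congr hn p (T_inj hT.choose_spec.choose_spec.symm)

theorem bmove_C1 (hn : 3 ≤ n) {p : V n} {j : ℕ} {hj : j + 1 < n}
    (hnp : ¬ CanPounce hn (C1c j hj) p) :
    bmove hn (C1c j hj) p = c1next j hj := by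
  have hC : IsC1 (C1c j hj : Fin 4 → V n) := ⟨j, hj, rfl⟩
  unfold bmove
  rw [dif_neg hnp, dif_neg C1_not_T, dif_pos hC]
  exact c1next_congr (C1_inj hC.choose_spec.choose_spec.symm)

theorem bmove_C2 (hn : 3 ≤ n) {p : V n} {j : ℕ} {hj : j + 1 < n}
    (hnp : ¬ CanPounce hn (C2c j hj) p) :
    bmove hn (C2c j hj) p = c2next j hj := by
  have hC : IsC2 (C2c j hj : Fin 4 → V n) := ⟨j, hj, rfl⟩
  unfold bmove
  rw [dif_neg hnp, dif_neg C2_not_T, dif_neg C2_not_C1, dif_pos hC]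
  exact c2next_congr (C2_inj hC.choose_spec.choose_spec.symm)

/-- invariant with fuel `k` -/
def InvS (hn : 3 ≤ n) (bs : Fin 4 → V n) (p : V n) (k : ℕ) : Prop :=
  CanPounce hn bs p ∨
  (∃ j, ∃ hj : j + 1 < n, bs = Tc j hj ∧ j ≤ p.2.1 ∧ 2 * (n - j) ≤ k) ∨
  (∃ j, ∃ hj : j + 1 < n, bs = C1c j hj ∧
    ((p.1.1 = 0 ∧ (p.2.1 = j ∨ p.2.1 = j + 1 ∨ p.2.1 = j + 2)) ∨
      (p.1.1 = 1 ∧ p.2.1 = j + 1)) ∧ n - j ≤ k) ∨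
  (∃ j, ∃ hj : j + 1 < n, bs = C2c j hj ∧
    ((p.1.1 = 2 ∧ (p.2.1 = j ∨ p.2.1 = j + 1 ∨ p.2.1 = j + 2)) ∨
      (p.1.1 = 1 ∧ p.2.1 = j + 1)) ∧ n - j ≤ k)

theorem inv_step (hn : 3 ≤ n) {bs bs' : Fin 4 → V n} {p p' : V n}
    (hbs' : bs' = bmove hn bs p) (hp' : stepRel (GG n) p p') {k : ℕ}
    (hI : InvS hn bs p (k + 1)) :
    CanPounce hn bs p ∨ InvS hn bs' p' k := by
  by_cases hcp : CanPounce hn bs p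
  · exact Or.inl hcp
  right
  have hr3 := p.1.isLt; have hcn := p.2.isLt
  have hr3' := p'.1.isLt; have hcn' := p'.2.isLt
  have hps := stepRel_iff.1 hp'
  rcases hI with hI | ⟨j, hj, hbs, hcol, hk⟩ | ⟨j, hj, hbs, hP, hk⟩ | ⟨j, hj, hbs, hP, hk⟩
  · exact absurd hI hcp
  · -- T mode
    subst hbs
    rw [bmove_T hn hcp] at hbs'
    rcases (by omega : p.2.1 = j ∨ p.2.1 = j + 1 ∨ j + 2 ≤ p.2.1) with hc | hc | hc
    · exact absurd (pounce_T hn hj (Or.inl hc)) hcp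
    · rcases (by omega : p.1.1 = 0 ∨ p.1.1 = 1 ∨ p.1.1 = 2) with h0 | h0 | h0
      · rw [tnext, if_pos ⟨h0, hc⟩] at hbs'
        exact Or.inr (Or.inr (Or.inl ⟨j, hj, hbs', by omega, by omega⟩))
      · exact absurd (pounce_T hn hj (Or.inr ⟨h0, hc⟩)) hcp
      · rw [tnext, if_neg (by omega), if_pos ⟨h0, hc⟩] at hbs'
        exact Or.inr (Or.inr (Or.inr ⟨j, hj, hbs', by omega, by omega⟩))
    · have h2 : j + 2 < n := by omega
      rw [tnext, if_neg (by omega), if_neg (by omega), dif_pos h2] at hbs'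
      exact Or.inr (Or.inl ⟨j + 1, h2, hbs', by omega, by omega⟩)
  · -- C1 mode
    subst hbs
    rw [bmove_C1 hn hcp] at hbs'
    rcases hP with ⟨h0, hc | hc | hc⟩ | ⟨h0, hc⟩
    · exact absurd (pounce_C1 hn hj (Or.inl ⟨h0, Or.inl hc⟩)) hcp
    · exact absurd (pounce_C1 hn hj (Or.inl ⟨h0, Or.inr hc⟩)) hcp
    · rcases (by omega : j + 3 = n ∨ j + 2 < n) with h3 | h3
      · exact absurd (pounce_C1 hn hj (Or.inr (Or.inr ⟨h0, hc, h3⟩))) hcp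
      · rw [c1next, dif_pos h3] at hbs'
        exact Or.inr (Or.inr (Or.inl ⟨j + 1, h3, hbs', by omega, by omega⟩))
    · exact absurd (pounce_C1 hn hj (Or.inr (Or.inl ⟨h0, hc⟩))) hcp
  · -- C2 mode
    subst hbs
    rw [bmove_C2 hn hcp] at hbs'
    rcases hP with ⟨h0, hc | hc | hc⟩ | ⟨h0, hc⟩
    · exact absurd (pounce_C2 hn hj (Or.inl ⟨h0, Or.inl hc⟩)) hcp
    · exact absurd (pounce_C2 hn hj (Or.inl ⟨h0, Or.inr hc⟩)) hcp
    · rcases (by omega : j + 3 = n ∨ j + 2 < n) with h3 | h3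
      · exact absurd (pounce_C2 hn hj (Or.inr (Or.inr ⟨h0, hc, h3⟩))) hcp
      · rw [c2next, dif_pos h3] at hbs'
        exact Or.inr (Or.inr (Or.inr ⟨j + 1, h3, hbs', by omega, by omega⟩))
    · exact absurd (pounce_C2 hn hj (Or.inr (Or.inl ⟨h0, hc⟩))) hcp

theorem inv_zero (hn : 3 ≤ n) {bs : Fin 4 → V n} {p : V n} (hI : InvS hn bs p 0) :
    CanPounce hn bs p := by
  rcases hI with hI | ⟨j, hj, _, _, hk⟩ | ⟨j, hj, _, _, hk⟩ | ⟨j, hj, _, _, hk⟩ <;>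
    first | exact hI | omega

theorem win4 (hn : 3 ≤ n) : BodyguardsWin (GG n) 4 := by
  have h01 : (0 : ℕ) + 1 < n := by omega
  refine ⟨Tc 0 h01, bmove hn, bmove_legal hn, ?_⟩
  intro pinit pmove hpm
  set S := gamePlay (Tc 0 h01) (bmove hn) pinit pmove with hSdef
  have hS1 : ∀ t, (S (t + 1)).1 = bmove hn (S t).1 (S t).2 := fun t => rfl
  have hS2 : ∀ t, (S (t + 1)).2 = pmove ((S (t + 1)).1) (S t).2 := fun t => rfl
  have hpstep : ∀ t, stepRel (GG n) (S t).2 (S (t + 1)).2 := fun t => by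
    rw [hS2]; exact hpm _ _
  have habs : ∀ t, CanPounce hn (S t).1 (S t).2 → CanPounce hn (S (t + 1)).1 (S (t + 1)).2 := by
    intro t h
    obtain ⟨f, hf, heq⟩ := bmove_eq_pounce hn h
    refine ⟨f, hf, fun i => ?_⟩
    rw [hS1, heq]
    exact role_step hn (hpstep t) (f i)
  have hcov : ∀ t, CanPounce hn (S t).1 (S t).2 →
      ∀ v, (GG n).Adj (S t).2 v → ∃ i, (S (t + 1)).1 i = v := by
    intro t h v hv
    obtain ⟨f, hf, heq⟩ := bmove_eq_pounce hn h
    obtain ⟨i0, hi0⟩ := role_cover hn hv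
    obtain ⟨i, hi⟩ := hf i0
    refine ⟨i, ?_⟩
    rw [hS1, heq]
    show roleVec hn (S t).2 (f i) = v
    rw [hi, hi0]
  have hterm : ∀ k t, InvS hn (S t).1 (S t).2 k → ∃ m, CanPounce hn (S m).1 (S m).2 := by
    intro k
    induction k with
    | zero => exact fun t h => ⟨t, inv_zero hn h⟩
    | succ k ih =>
        intro t h
        rcases inv_step hn (hS1 t) (hpstep t) h with h' | h'
        · exact ⟨t, h'⟩
        · exact ih (t + 1) h'
  have hinv0 : InvS hn (S 0).1 (S 0).2 (2 * n) :=
    Or.inr (Or.inl ⟨0, h01, rfl, by omega, by omega⟩)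
  obtain ⟨N, hN⟩ := hterm (2 * n) 0 hinv0
  refine ⟨N, ?_⟩
  have hall : ∀ t, N ≤ t → CanPounce hn (S t).1 (S t).2 := by
    intro t ht
    exact Nat.le_induction hN (fun m _ ih => habs m ih) t ht
  intro t ht v hv
  exact hcov t (hall t ht) v hv

theorem lower4 (hn : 3 ≤ n) (k : ℕ) (hw : BodyguardsWin (GG n) k) : 4 ≤ k := by
  obtain ⟨binit, bmv, hleg, hwin⟩ := hw
  have h1n : (1 : ℕ) < n := by omega
  have h2n : (2 : ℕ) < n := by omega
  have h0n : (0 : ℕ) < n := by omega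
  obtain ⟨N, hN⟩ := hwin (fun _ => ((⟨1, by omega⟩ : Fin 3), (⟨1, h1n⟩ : Fin n)))
    (fun _ p => p) (fun _ _ => Or.inl rfl)
  set c0 : V n := ((⟨1, by omega⟩ : Fin 3), (⟨1, h1n⟩ : Fin n)) with hc0
  set S := gamePlay binit bmv (fun _ => c0) (fun _ p => p) with hS
  have hp : ∀ t, (S t).2 = c0 := by
    intro t; induction t with
    | zero => rfl
    | succ t ih => exact ih
  have hcov := hN N le_rfl
  rw [hp N] at hcov
  set bs := (S (N + 1)).1 with hbs
  have adj0 : (GG n).Adj c0 ((⟨0, by omega⟩ : Fin 3), (⟨1, h1n⟩ : Fin n)) := by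
    rw [adj_iff]; simp [hc0]
  have adj1 : (GG n).Adj c0 ((⟨2, by omega⟩ : Fin 3), (⟨1, h1n⟩ : Fin n)) := by
    rw [adj_iff]; simp [hc0]
  have adj2 : (GG n).Adj c0 ((⟨1, by omega⟩ : Fin 3), (⟨0, h0n⟩ : Fin n)) := by
    rw [adj_iff]; simp [hc0]
  have adj3 : (GG n).Adj c0 ((⟨1, by omega⟩ : Fin 3), (⟨2, h2n⟩ : Fin n)) := by
    rw [adj_iff]; simp [hc0]
  obtain ⟨i0, h0⟩ := hcov _ adj0
  obtain ⟨i1, h1⟩ := hcov _ adj1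
  obtain ⟨i2, h2⟩ := hcov _ adj2
  obtain ⟨i3, h3⟩ := hcov _ adj3
  have key : Function.Injective (![i0, i1, i2, i3] : Fin 4 → Fin k) := by
    have hx : ∀ (x y : Fin k) (vx vy : V n), bs x = vx → bs y = vy → vx ≠ vy → x ≠ y :=
      fun x y vx vy hxx hyy hne he => hne (by rw [← hxx, ← hyy, he])
    intro a b hab
    fin_cases a <;> fin_cases b <;> first
      | rfl
      | (exact absurd hab (hx _ _ _ _ ‹_› ‹_› (by rw [Ne, veq_iff]; simp)))
      | (exact absurd hab (Ne.symm (hx _ _ _ _ ‹_› ‹_› (by rw [Ne, veq_iff]; simp))).elim)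
  have := Fintype.card_le_of_injective _ key
  simpa using this

end BGproof

/-- For `n ≥ 3`, `B(P_3 □ P_n) = 4`. -/
theorem bodyguardNumber_pathGraph_three_boxProd (n : ℕ) (hn : 3 ≤ n) :
    bodyguardNumber (SimpleGraph.pathGraph 3 □ SimpleGraph.pathGraph n) = 4 := by
  have hwin := BGproof.win4 hn
  apply le_antisymm
  · exact Nat.sInf_le hwin
  · exact le_csInf ⟨4, hwin⟩ fun k hk => BGproof.lower4 hn k hk
end

section
/- For k ≥ 1 and integers n_i ≥ 3 for 1 ≤ i ≤ k, the strong product of paths satisfies B(⊠_{i=1}^k P_{n_i}) = 3^k − 1. -/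
open SimpleGraph

/-- The `k`-fold strong product of paths `⊠_{i=1}^k P_{n i}`: two distinct tuples are
adjacent iff in every coordinate they are equal or adjacent in the corresponding path. -/
def strongGrid (k : ℕ) (n : Fin k → ℕ) : SimpleGraph ((i : Fin k) → Fin (n i)) where
  Adj x y := x ≠ y ∧ ∀ i, x i = y i ∨ (SimpleGraph.pathGraph (n i)).Adj (x i) (y i)
  symm := by
    refine ⟨?_⟩
    rintro x y ⟨hne, h⟩
    exact ⟨hne.symm, fun i => (h i).imp Eq.symm SimpleGraph.Adj.symm⟩
  loopless := ⟨fun x h => h.1 rfl⟩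

/- move one step toward target -/
def mt1 (x y : ℕ) : ℕ := if x < y then x + 1 else if y < x then x - 1 else x

lemma mt1_dist (x y : ℕ) : Nat.dist (mt1 x y) y = Nat.dist x y - 1 := by
  simp only [mt1, Nat.dist]; split_ifs <;> omega

lemma mt1_close (x y : ℕ) : Nat.dist x (mt1 x y) ≤ 1 := by
  simp only [mt1, Nat.dist]; split_ifs <;> omega

lemma chase (M : ℕ) (b t : ℕ → ℕ) (ht : ∀ m, t m ≤ M)
    (hstep : ∀ m, b (m + 1) = mt1 (b m) (t m))
    (hlip : ∀ m, Nat.dist (t (m + 1)) (t m) ≤ 1) :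
    ∃ N, ∀ m, N ≤ m → b (m + 1) = t m := by
  have mono : ∀ m, Nat.dist (b (m + 2)) (t (m + 1)) ≤ Nat.dist (b (m + 1)) (t m) := by
    intro m
    have h3 := mt1_dist (b (m + 1)) (t (m + 1))
    rw [← hstep (m + 1)] at h3
    have e2 : m + 1 + 1 = m + 2 := rfl
    rw [e2] at h3
    have h2 := hlip m
    simp only [Nat.dist] at h2 h3 ⊢
    omega
  have anti : Antitone (fun m => Nat.dist (b (m + 1)) (t m)) :=
    antitone_nat_of_succ_le mono
  obtain ⟨N, hNm⟩ := Nat.sInf_mem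
    (Set.range_nonempty (fun m => Nat.dist (b (m + 1)) (t m)))
  set mm := sInf (Set.range (fun m => Nat.dist (b (m + 1)) (t m))) with hmmdef
  have hconst : ∀ m, N ≤ m → Nat.dist (b (m + 1)) (t m) = mm := by
    intro m hm
    refine le_antisymm ?_ (Nat.sInf_le ⟨m, rfl⟩)
    have h5 := anti hm
    simp only at h5 hNm
    omega
  rcases Nat.eq_zero_or_pos mm with hm | hm
  · refine ⟨N, fun m hmN => ?_⟩
    have := hconst m hmN
    simp only [Nat.dist] at this
    omega
  · exfalso
    have key : ∀ m, N ≤ m →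
        ((b (m + 1) < t m → b (m + 2) < t (m + 1) ∧ t (m + 1) = t m + 1) ∧
         (t m < b (m + 1) → t (m + 1) < b (m + 2) ∧ t m = t (m + 1) + 1)) := by
      intro m hmN
      have h1 := hconst m hmN
      have h2 := hconst (m + 1) (by omega)
      have h3 := hstep (m + 1)
      have e2 : m + 1 + 1 = m + 2 := rfl
      rw [e2] at h3 h2
      have h4 := hlip m
      simp only [Nat.dist, mt1] at h1 h2 h3 h4
      split_ifs at h3 <;> omega
    rcases Nat.lt_trichotomy (b (N + 1)) (t N) with hlt | heq | hgt
    · have up : ∀ p, b (N + p + 1) < t (N + p) ∧ t (N + p) = t N + p := by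
        intro p
        induction p with
        | zero => exact ⟨hlt, rfl⟩
        | succ p ih =>
          have hk := (key (N + p) (by omega)).1 ih.1
          refine ⟨hk.1, ?_⟩
          show t (N + p + 1) = t N + (p + 1)
          omega
      have h1 := (up (M + 1)).2
      have h2 := ht (N + (M + 1))
      omega
    · have := hconst N le_rfl
      simp only [Nat.dist] at this
      omega
    · have down : ∀ p, t (N + p) < b (N + p + 1) ∧ t N = t (N + p) + p := by
        intro p
        induction p with
        | zero => exact ⟨hgt, rfl⟩
        | succ p ih =>
          have hk := (key (N + p) (by omega)).2 ih.1
          refine ⟨hk.1, ?_⟩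
          show t N = t (N + p + 1) + (p + 1)
          omega
      have := (down (t N + 1)).2
      omega

section Grid

variable {k : ℕ} {n : Fin k → ℕ}

/-- The clamped target position at offset `d` from `p`. -/
def tgt (hn : ∀ i, 3 ≤ n i) (d : Fin k → Fin 3) (p : (i : Fin k) → Fin (n i)) :
    (i : Fin k) → Fin (n i) :=
  fun i => ⟨min ((p i : ℕ) + (d i : ℕ) - 1) (n i - 1), by have := hn i; omega⟩

/-- Move each coordinate one step toward the target. -/
def mv (b t : (i : Fin k) → Fin (n i)) : (i : Fin k) → Fin (n i) :=
  fun i => ⟨mt1 (b i) (t i), by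
    have h1 := (b i).isLt
    have h2 := (t i).isLt
    simp only [mt1]; split_ifs <;> omega⟩

lemma step_of_dist (x y : (i : Fin k) → Fin (n i))
    (h : ∀ i, Nat.dist (x i) (y i) ≤ 1) : stepRel (strongGrid k n) x y := by
  by_cases hxy : x = y
  · exact Or.inl hxy
  · refine Or.inr ⟨hxy, fun i => ?_⟩
    by_cases hi : x i = y i
    · exact Or.inl hi
    · refine Or.inr (SimpleGraph.pathGraph_adj.2 ?_)
      have h1 := h i
      have h2 : (x i : ℕ) ≠ (y i : ℕ) := fun hc => hi (Fin.ext hc)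
      simp only [Nat.dist] at h1
      omega

lemma dist_of_step (x y : (i : Fin k) → Fin (n i))
    (h : stepRel (strongGrid k n) x y) (i : Fin k) :
    Nat.dist (x i) (y i) ≤ 1 := by
  rcases h with rfl | ⟨_, hadj⟩
  · simp [Nat.dist]
  · rcases hadj i with he | ha
    · rw [he]; simp [Nat.dist]
    · rw [SimpleGraph.pathGraph_adj] at ha
      simp only [Nat.dist]
      omega

lemma tgt_lip (hn : ∀ i, 3 ≤ n i) (d : Fin k → Fin 3)
    (p q : (i : Fin k) → Fin (n i)) (h : ∀ i, Nat.dist (p i) (q i) ≤ 1) (i : Fin k) :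
    Nat.dist (tgt hn d p i) (tgt hn d q i) ≤ 1 := by
  have h1 := h i
  simp only [tgt, Nat.dist] at h1 ⊢
  omega

lemma tgt_cover (hn : ∀ i, 3 ≤ n i) (p v : (i : Fin k) → Fin (n i))
    (hadj : (strongGrid k n).Adj p v) :
    ∃ d : Fin k → Fin 3, d ≠ (fun _ => ⟨1, by omega⟩) ∧ tgt hn d p = v := by
  classical
  refine ⟨fun i => if (v i : ℕ) < p i then ⟨0, by omega⟩
      else if (p i : ℕ) < v i then ⟨2, by omega⟩ else ⟨1, by omega⟩, ?_, ?_⟩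
  · intro hd
    obtain ⟨i, hi⟩ : ∃ i, p i ≠ v i := by
      by_contra hc
      push_neg at hc
      exact hadj.ne (funext hc)
    have := congrFun hd i
    split_ifs at this with h1 h2
    · exact absurd (congrArg Fin.val this) (by simp)
    · exact absurd (congrArg Fin.val this) (by simp)
    · exact hi (Fin.ext (by omega))
  · funext i
    have hd := dist_of_step p v (Or.inr hadj) i
    have h1 := (v i).isLt
    apply Fin.ext
    simp only [tgt, Nat.dist] at hd ⊢
    split_ifs <;> simp <;> omega

end Grid

/-- The all-ones vector, representing the zero offset. -/
def onevec (k : ℕ) : Fin k → Fin 3 := fun _ => ⟨1, by omega⟩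

/-- Enumeration of the nonzero offsets by `Fin (3 ^ k - 1)`. -/
def off (k : ℕ) (i : Fin (3 ^ k - 1)) : Fin k → Fin 3 :=
  finFunctionFinEquiv.symm
    ⟨if (i : ℕ) < (finFunctionFinEquiv (onevec k) : ℕ) then (i : ℕ) else (i : ℕ) + 1, by
      have h3 : 0 < 3 ^ k := pow_pos (by norm_num) k
      have h4 := i.isLt
      have h5 := (finFunctionFinEquiv (onevec k)).isLt
      split_ifs with h <;> omega⟩

lemma off_surj (k : ℕ) (d : Fin k → Fin 3) (hd : d ≠ onevec k) : ∃ i, off k i = d := by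
  have h3 : 0 < 3 ^ k := pow_pos (by norm_num) k
  set z := (finFunctionFinEquiv (onevec k) : Fin (3 ^ k)) with hz
  set w := (finFunctionFinEquiv d : Fin (3 ^ k)) with hw
  have hwz : (w : ℕ) ≠ (z : ℕ) := by
    intro h
    exact hd (finFunctionFinEquiv.injective (Fin.ext h))
  have hzlt := z.isLt
  have hwlt := w.isLt
  rcases Nat.lt_or_ge (w : ℕ) (z : ℕ) with h | h
  · refine ⟨⟨(w : ℕ), by omega⟩, ?_⟩
    rw [off, Equiv.symm_apply_eq]
    apply Fin.ext
    show (if (w : ℕ) < (z : ℕ) then (w : ℕ) else (w : ℕ) + 1) = (w : ℕ)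
    rw [if_pos h]
  · refine ⟨⟨(w : ℕ) - 1, by omega⟩, ?_⟩
    rw [off, Equiv.symm_apply_eq]
    apply Fin.ext
    show (if (w : ℕ) - 1 < (z : ℕ) then (w : ℕ) - 1 else (w : ℕ) - 1 + 1) = (w : ℕ)
    rw [if_neg (by omega)]
    omega

lemma off_ne (k : ℕ) (i : Fin (3 ^ k - 1)) : off k i ≠ onevec k := by
  intro h
  have h0 := congrArg finFunctionFinEquiv h
  rw [off, Equiv.apply_symm_apply] at h0
  have hv : (if (i : ℕ) < (finFunctionFinEquiv (onevec k) : ℕ) then (i : ℕ)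
      else (i : ℕ) + 1) = (finFunctionFinEquiv (onevec k) : ℕ) := congrArg Fin.val h0
  split_ifs at hv <;> omega

lemma off_inj (k : ℕ) : Function.Injective (off k) := by
  intro i1 i2 h
  have h0 := congrArg finFunctionFinEquiv h
  rw [off, off, Equiv.apply_symm_apply, Equiv.apply_symm_apply] at h0
  have hv : (if (i1 : ℕ) < (finFunctionFinEquiv (onevec k) : ℕ) then (i1 : ℕ)
        else (i1 : ℕ) + 1)
      = (if (i2 : ℕ) < (finFunctionFinEquiv (onevec k) : ℕ) then (i2 : ℕ)
        else (i2 : ℕ) + 1) := congrArg Fin.val h0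
  apply Fin.ext
  split_ifs at hv <;> omega

section Main

variable {k : ℕ} {n : Fin k → ℕ}

/-- Initial bodyguard placement. -/
def bgInit (hn : ∀ i, 3 ≤ n i) : Fin (3 ^ k - 1) → ((i : Fin k) → Fin (n i)) :=
  fun _ i => ⟨0, by have := hn i; omega⟩

/-- Bodyguard move: each guard moves one step toward its clamped offset target. -/
def bgMove (hn : ∀ i, 3 ≤ n i) (bs : Fin (3 ^ k - 1) → ((i : Fin k) → Fin (n i)))
    (p : (i : Fin k) → Fin (n i)) : Fin (3 ^ k - 1) → ((i : Fin k) → Fin (n i)) :=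
  fun i => mv (bs i) (tgt hn (off k i) p)

lemma bg_upper (hn : ∀ i, 3 ≤ n i) : BodyguardsWin (strongGrid k n) (3 ^ k - 1) := by
  classical
  refine ⟨bgInit hn, bgMove hn, ?_, ?_⟩
  · intro bs p i
    exact step_of_dist _ _ (fun j => mt1_close _ _)
  · intro pinit pmove hp
    have hPs : ∀ m, stepRel (strongGrid k n)
        ((gamePlay (bgInit hn) (bgMove hn) pinit pmove m).2)
        ((gamePlay (bgInit hn) (bgMove hn) pinit pmove (m + 1)).2) := by
      intro m
      exact hp _ _
    have hch : ∀ ij : Fin (3 ^ k - 1) × Fin k, ∃ N, ∀ m, N ≤ m →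
        (((gamePlay (bgInit hn) (bgMove hn) pinit pmove (m + 1)).1 ij.1 ij.2 : ℕ))
          = (tgt hn (off k ij.1) ((gamePlay (bgInit hn) (bgMove hn) pinit pmove m).2) ij.2 : ℕ) := by
      rintro ⟨i, j⟩
      have hj := hn j
      obtain ⟨N, hN⟩ := chase (n j - 1)
        (fun m => ((gamePlay (bgInit hn) (bgMove hn) pinit pmove m).1 i j : ℕ))
        (fun m => (tgt hn (off k i) ((gamePlay (bgInit hn) (bgMove hn) pinit pmove m).2) j : ℕ))
        (by intro m; simp only [tgt]; omega)
        (by intro m; rfl)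
        (by
          intro m
          exact tgt_lip hn (off k i) _ _
            (fun j' => by rw [Nat.dist_comm]; exact dist_of_step _ _ (hPs m) j') j)
      exact ⟨N, hN⟩
    choose Nf hNf using hch
    refine ⟨Finset.univ.sup Nf, ?_⟩
    intro m hm v hadj
    obtain ⟨d, hd1, hd2⟩ := tgt_cover hn _ v hadj
    obtain ⟨i, hi⟩ := off_surj k d hd1
    refine ⟨i, ?_⟩
    funext j
    apply Fin.ext
    have hval := hNf (i, j) m (le_trans (Finset.le_sup (Finset.mem_univ (i, j))) hm)
    rw [hval, hi, hd2]

end Main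

lemma bg_lower {k : ℕ} {n : Fin k → ℕ} (hn : ∀ i, 3 ≤ n i) (m : ℕ)
    (hwin : BodyguardsWin (strongGrid k n) m) : 3 ^ k - 1 ≤ m := by
  classical
  obtain ⟨binit, bmove, hleg, hw⟩ := hwin
  obtain ⟨N, hN⟩ := hw (fun _ i => ⟨1, by have := hn i; omega⟩) (fun _ p => p)
    (fun _ _ => Or.inl rfl)
  have hP : ∀ m', (gamePlay binit bmove (fun _ i => ⟨1, by have := hn i; omega⟩)
      (fun _ p => p) m').2 = (fun i => (⟨1, by have := hn i; omega⟩ : Fin (n i))) := by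
    intro m'
    induction m' with
    | zero => rfl
    | succ m' ih => exact ih
  have hcov := hN N le_rfl
  rw [hP N] at hcov
  -- the embedded neighbour corresponding to an offset d
  have hadj : ∀ i1 : Fin (3 ^ k - 1), (strongGrid k n).Adj
      (fun i => (⟨1, by have := hn i; omega⟩ : Fin (n i)))
      (fun i => (⟨(off k i1 i : ℕ), by have := hn i; have := (off k i1 i).isLt; omega⟩ :
        Fin (n i))) := by
    intro i1
    constructor
    · intro hc
      apply off_ne k i1
      funext i
      have hv : (1 : ℕ) = (off k i1 i : ℕ) := congrArg Fin.val (congrFun hc i)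
      exact Fin.ext (by simpa [onevec] using hv.symm)
    · intro i
      by_cases hdi : (off k i1 i : ℕ) = 1
      · exact Or.inl (Fin.ext hdi.symm)
      · refine Or.inr (SimpleGraph.pathGraph_adj.2 ?_)
        have := (off k i1 i).isLt
        show 1 + 1 = (off k i1 i : ℕ) ∨ (off k i1 i : ℕ) + 1 = 1
        omega
  have hg : ∀ i1 : Fin (3 ^ k - 1), ∃ i2 : Fin m,
      (gamePlay binit bmove (fun _ i => ⟨1, by have := hn i; omega⟩) (fun _ p => p)
        (N + 1)).1 i2
      = (fun i => (⟨(off k i1 i : ℕ), by have := hn i; have := (off k i1 i).isLt; omega⟩ :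
          Fin (n i))) := fun i1 => hcov _ (hadj i1)
  choose g hgspec using hg
  have hginj : Function.Injective g := by
    intro i1 i2 h
    apply off_inj k
    have h1 := hgspec i1
    rw [h, hgspec i2] at h1
    funext i
    have hv := congrArg Fin.val (congrFun h1 i)
    exact Fin.ext hv.symm
  have := Fintype.card_le_of_injective g hginj
  simpa using this


/-- For `k ≥ 1` and `n i ≥ 3` for all `i`, the strong product of paths satisfies
`B(⊠_{i=1}^k P_{n i}) = 3 ^ k - 1`. -/
theorem bodyguardNumber_strongGrid (k : ℕ) (hk : 1 ≤ k) (n : Fin k → ℕ)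
    (hn : ∀ i, 3 ≤ n i) :
    bodyguardNumber (strongGrid k n) = 3 ^ k - 1 := by
  have h1 : BodyguardsWin (strongGrid k n) (3 ^ k - 1) := bg_upper hn
  refine le_antisymm (Nat.sInf_le h1) ?_
  have h2 := Nat.sInf_mem (⟨_, h1⟩ : {m | BodyguardsWin (strongGrid k n) m}.Nonempty)
  exact bg_lower hn _ h2
end
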